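/- arXiv:1708.09141 — 2 statements merged into one kernel-verified Lean document; each statement's English description precedes it below -/
import Mathlib

section
/- Let G1 and G2 be disjoint 2-edge-connected multigraphs. Then the treewidth of their vertex-identification equals max{tw(G1), tw(G2)}, and the treewidth of both their edge-identification and their vertex-edge-identification equals max{2, tw(G1), tw(G2)}. -/
open scoped Classical

/-- A finite multigraph without loops: a vertex type, an edge type, and an
incidence map assigning to each edge an unordered pair of distinct vertices. -/
structure MGraph where
  V : Type
  E : Type
  finV : Finite V
  finE : Finite E
  ends : E → Sym2 V
  noLoop : ∀ e, ¬ (ends e).IsDiag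

namespace MGraph

variable (G : MGraph)

/-- Degree of a vertex counting only edges in the edge set `F`. -/
noncomputable def degOn (F : Set G.E) (v : G.V) : ℕ := {e | e ∈ F ∧ v ∈ G.ends e}.ncard

/-- Degree of a vertex. -/
noncomputable def deg (v : G.V) : ℕ := G.degOn Set.univ v

/-- Adjacency using only edges from `F`. -/
def AdjOn (F : Set G.E) (a b : G.V) : Prop := ∃ e ∈ F, G.ends e = s(a, b)

/-- Reachability using only edges from `F`. -/
def ReachOn (F : Set G.E) : G.V → G.V → Prop := Relation.ReflTransGen (G.AdjOn F)

/-- Connectivity of a multigraph. -/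
def Connected : Prop := Nonempty G.V ∧ ∀ a b : G.V, G.ReachOn Set.univ a b

/-- A set of edges forms a cycle: it is nonempty, every vertex has degree 0 or 2
in it, and any two of its endpoints are joined by a path inside it. -/
def IsCycle (C : Set G.E) : Prop :=
  C.Nonempty ∧ (∀ v, G.degOn C v = 0 ∨ G.degOn C v = 2) ∧
    ∀ e ∈ C, ∀ f ∈ C, ∀ a b : G.V, a ∈ G.ends e → b ∈ G.ends f → G.ReachOn C a b

/-- A cycle decomposition of the edge set `F`: a set of cycles inside `F` such
that every edge of `F` lies in exactly one of them. -/
def IsCycleDecompOn (F : Set G.E) (D : Set (Set G.E)) : Prop :=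
  (∀ C ∈ D, G.IsCycle C ∧ C ⊆ F) ∧ ∀ e ∈ F, ∃! C, C ∈ D ∧ e ∈ C

/-- A cycle decomposition of the graph. -/
def IsCycleDecomp (D : Set (Set G.E)) : Prop := G.IsCycleDecompOn Set.univ D

/-- Minimum number of cycles in a cycle decomposition of `F`. -/
noncomputable def cOn (F : Set G.E) : ℕ :=
  sInf {n | ∃ D, G.IsCycleDecompOn F D ∧ D.ncard = n}

/-- Maximum number of cycles in a cycle decomposition of `F`. -/
noncomputable def nuOn (F : Set G.E) : ℕ :=
  sSup {n | ∃ D, G.IsCycleDecompOn F D ∧ D.ncard = n}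

/-- Minimum cycle number. -/
noncomputable def c : ℕ := G.cOn Set.univ

/-- Maximum cycle number. -/
noncomputable def nu : ℕ := G.nuOn Set.univ

/-- A multigraph is Eulerian if it admits a closed walk traversing every edge
exactly once. -/
def IsEulerian : Prop :=
  ∃ (vs : List G.V) (es : List G.E),
    vs.length = es.length + 1 ∧
    (∀ (i : ℕ) (e : G.E) (a b : G.V), es[i]? = some e → vs[i]? = some a →
      vs[i + 1]? = some b → G.ends e = s(a, b)) ∧
    vs.head? = vs.getLast? ∧ es.Nodup ∧ ∀ e : G.E, e ∈ es

/-- A cut-edge (bridge): its endpoints are disconnected after its removal. -/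
def IsBridge (e : G.E) : Prop :=
  ∃ a b, G.ends e = s(a, b) ∧ ¬ G.ReachOn {e}ᶜ a b

/-- 2-edge-connectivity: connected and without cut-edges. -/
def TwoEdgeConnected : Prop := G.Connected ∧ ∀ e, ¬ G.IsBridge e

/-- Reachability avoiding a vertex. -/
def ReachAvoid (v : G.V) (a b : G.V) : Prop :=
  Relation.ReflTransGen (fun x y => x ≠ v ∧ y ≠ v ∧ G.AdjOn Set.univ x y) a b

/-- A cut-vertex: two vertices in the same component get separated by its removal. -/
def IsCutVertex (v : G.V) : Prop :=
  ∃ a b, a ≠ v ∧ b ≠ v ∧ G.ReachOn Set.univ a b ∧ ¬ G.ReachAvoid v a b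

/-- Biconnected: connected, at least two vertices, and without cut-vertices. -/
def Biconnected : Prop :=
  G.Connected ∧ 2 ≤ Nat.card G.V ∧ ∀ v, ¬ G.IsCutVertex v

/-- The vertices covered by a set of edges. -/
def VertexSetOf (C : Set G.E) : Set G.V := {v | ∃ e ∈ C, v ∈ G.ends e}

/-- No two edge-disjoint cycles share more than two vertices. -/
def NoTwoCyclesShareThree : Prop :=
  ∀ C1 C2 : Set G.E, G.IsCycle C1 → G.IsCycle C2 → Disjoint C1 C2 →
    (G.VertexSetOf C1 ∩ G.VertexSetOf C2).ncard ≤ 2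

/-- An Eulerian multiedge: two vertices joined by an even positive number of
parallel edges. -/
def IsEulerianMultiedge : Prop :=
  Nat.card G.V = 2 ∧ 0 < Nat.card G.E ∧ Even (Nat.card G.E)

end MGraph

/-- Isomorphism of multigraphs. -/
structure MIso (G H : MGraph) where
  vEquiv : G.V ≃ H.V
  eEquiv : G.E ≃ H.E
  ends_eq : ∀ e, H.ends (eEquiv e) = (G.ends e).map vEquiv

namespace MGraph

/-- Vertex-identification: glue `u1 ∈ V(G1)` with `u2 ∈ V(G2)`. -/
noncomputable def vertexIdent (G1 G2 : MGraph) (u1 : G1.V) (u2 : G2.V) : MGraph where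
  V := G1.V ⊕ {v : G2.V // v ≠ u2}
  E := G1.E ⊕ G2.E
  finV := by have := G1.finV; have := G2.finV; infer_instance
  finE := by have := G1.finE; have := G2.finE; infer_instance
  ends := fun e =>
    match e with
    | Sum.inl e => (G1.ends e).map Sum.inl
    | Sum.inr e => (G2.ends e).map
        (fun v => if h : v = u2 then Sum.inl u1 else Sum.inr ⟨v, h⟩)
  noLoop := by
    rintro (e | e) h
    · exact G1.noLoop e ((Sym2.isDiag_map Sum.inl_injective).mp h)
    · refine G2.noLoop e ((Sym2.isDiag_map ?_).mp h)
      intro a b hab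
      by_cases ha : a = u2 <;> by_cases hb : b = u2 <;>
        simp [ha, hb] at hab ⊢ <;> simp_all

/-- Edge-identification: delete `e1` and `e2` (with endpoints `u1, v1` resp.
`u2, v2`) and add the new edges `u1u2` and `v1v2`. -/
def edgeIdent (G1 G2 : MGraph) (e1 : G1.E) (e2 : G2.E)
    (u1 v1 : G1.V) (u2 v2 : G2.V) : MGraph where
  V := G1.V ⊕ G2.V
  E := {e : G1.E // e ≠ e1} ⊕ {e : G2.E // e ≠ e2} ⊕ Bool
  finV := by have := G1.finV; have := G2.finV; infer_instance
  finE := by have := G1.finE; have := G2.finE; infer_instance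
  ends := fun e =>
    match e with
    | Sum.inl e => (G1.ends e.1).map Sum.inl
    | Sum.inr (Sum.inl e) => (G2.ends e.1).map Sum.inr
    | Sum.inr (Sum.inr true) => s(Sum.inl u1, Sum.inr u2)
    | Sum.inr (Sum.inr false) => s(Sum.inl v1, Sum.inr v2)
  noLoop := by
    rintro (e | e | b) h
    · exact G1.noLoop e.1 ((Sym2.isDiag_map Sum.inl_injective).mp h)
    · exact G2.noLoop e.1 ((Sym2.isDiag_map Sum.inr_injective).mp h)
    · cases b <;> simp [Sym2.mk_isDiag_iff] at h

/-- Vertex-edge-identification: identify `v1` with `v2`, delete `e1 = u1v1`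
and `e2 = u2v2`, and add a new edge `u1u2`. -/
noncomputable def vertexEdgeIdent (G1 G2 : MGraph) (e1 : G1.E) (e2 : G2.E)
    (u1 v1 : G1.V) (u2 v2 : G2.V) (h2 : G2.ends e2 = s(u2, v2)) : MGraph where
  V := G1.V ⊕ {w : G2.V // w ≠ v2}
  E := {e : G1.E // e ≠ e1} ⊕ {e : G2.E // e ≠ e2} ⊕ Unit
  finV := by have := G1.finV; have := G2.finV; infer_instance
  finE := by have := G1.finE; have := G2.finE; infer_instance
  ends := fun e =>
    match e with
    | Sum.inl e => (G1.ends e.1).map Sum.inl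
    | Sum.inr (Sum.inl e) => (G2.ends e.1).map
        (fun w => if h : w = v2 then Sum.inl v1 else Sum.inr ⟨w, h⟩)
    | Sum.inr (Sum.inr _) =>
        s(Sum.inl u1, Sum.inr ⟨u2, fun h =>
          G2.noLoop e2 (by rw [h2, h]; exact Sym2.mk_isDiag_iff.mpr rfl)⟩)
  noLoop := by
    rintro (e | e | u) h
    · exact G1.noLoop e.1 ((Sym2.isDiag_map Sum.inl_injective).mp h)
    · refine G2.noLoop e.1 ((Sym2.isDiag_map ?_).mp h)
      intro a b hab
      by_cases ha : a = v2 <;> by_cases hb : b = v2 <;>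
        simp [ha, hb] at hab ⊢ <;> simp_all
    · simp [Sym2.mk_isDiag_iff] at h

/-- Delete an edge from a multigraph. -/
def deleteEdge (G : MGraph) (e : G.E) : MGraph where
  V := G.V
  E := {f : G.E // f ≠ e}
  finV := G.finV
  finE := by have := G.finE; infer_instance
  ends := fun f => G.ends f.1
  noLoop := fun f => G.noLoop f.1

/-- `Sym2.pmap`-style map into a subtype. -/
noncomputable def sym2Pmap {α β : Type} {p : α → Prop} (f : ∀ a, p a → β)
    (s : Sym2 α) (h : ∀ a ∈ s, p a) : Sym2 β :=
  let z := Classical.choose (Quot.exists_rep s)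
  s(f z.1 (h z.1 (by
      have hz : Quot.mk _ z = s := Classical.choose_spec (Quot.exists_rep s)
      rw [← hz]; exact Sym2.mem_mk_left z.1 z.2)),
    f z.2 (h z.2 (by
      have hz : Quot.mk _ z = s := Classical.choose_spec (Quot.exists_rep s)
      rw [← hz]; exact Sym2.mem_mk_right z.1 z.2)))

/-- Delete a vertex (and all incident edges) from a multigraph. -/
noncomputable def deleteVertex (G : MGraph) (v : G.V) : MGraph where
  V := {w : G.V // w ≠ v}
  E := {e : G.E // v ∉ G.ends e}
  finV := by have := G.finV; infer_instance
  finE := by have := G.finE; infer_instance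
  ends := fun e => sym2Pmap (fun a ha => (⟨a, ha⟩ : {w : G.V // w ≠ v}))
    (G.ends e.1) (fun a ha hav => e.2 (hav ▸ ha))
  noLoop := by
    rintro ⟨e, he⟩ h
    apply G.noLoop e
    unfold sym2Pmap at h
    have hz : Quot.mk _ (Classical.choose (Quot.exists_rep (G.ends e))) = G.ends e :=
      Classical.choose_spec (Quot.exists_rep (G.ends e))
    rw [Sym2.mk_isDiag_iff] at h
    have : (Classical.choose (Quot.exists_rep (G.ends e))).1 =
        (Classical.choose (Quot.exists_rep (G.ends e))).2 := congrArg Subtype.val h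
    rw [← hz]
    exact Sym2.mk_isDiag_iff.mpr this

end MGraph

/-- A tree decomposition of a multigraph: a tree of bags covering all vertices
and edges such that the bags containing a given vertex form a subtree. -/
structure TreeDecomp (G : MGraph) where
  ι : Type
  t : SimpleGraph ι
  isTree : t.IsTree
  bag : ι → Set G.V
  covers_vertex : ∀ v : G.V, ∃ i, v ∈ bag i
  covers_edge : ∀ e : G.E, ∃ i, ∀ v ∈ G.ends e, v ∈ bag i
  bags_connected : ∀ v : G.V, (SimpleGraph.induce {i | v ∈ bag i} t).Connected

namespace MGraph

/-- The graph has treewidth at most `k`. -/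
def twLE (G : MGraph) (k : ℕ) : Prop :=
  ∃ T : TreeDecomp G, ∀ i, (T.bag i).ncard ≤ k + 1

/-- Treewidth of a multigraph. -/
noncomputable def treewidth (G : MGraph) : ℕ := sInf {k | G.twLE k}

/-- The closed necklace on `n ≥ 2` vertices: a cycle of length `n` with all
of its edges doubled. -/
def necklace (n : ℕ) (hn : 2 ≤ n) : MGraph where
  V := ZMod n
  E := ZMod n × Bool
  finV := by have : NeZero n := ⟨by omega⟩; infer_instance
  finE := by have : NeZero n := ⟨by omega⟩; infer_instance
  ends := fun e => s(e.1, e.1 + 1)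
  noLoop := by
    have : Fact (1 < n) := ⟨hn⟩
    intro e h
    rw [Sym2.mk_isDiag_iff] at h
    exact one_ne_zero (left_eq_add.mp h)

end MGraph

lemma SimpleGraph.induce_connected_adj_union {V : Type*} {G : SimpleGraph V} {v w : V}
    {s t : Set V} (sconn : (G.induce s).Connected) (tconn : (G.induce t).Connected)
    (hv : v ∈ s) (hw : w ∈ t) (ha : G.Adj v w) : (G.induce (s ∪ t)).Connected :=
  SimpleGraph.connected_induce_union sconn.preconnected tconn.preconnected hv hw ha


namespace TWAux

open SimpleGraph

variable {ι1 ι2 : Type} {V : Type}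

/-- Transfer reachability in an induced subgraph to a larger induced subgraph. -/
lemma reachable_induce_mono {t : SimpleGraph V} {A U : Set V} (h : A ⊆ U) {i j : V}
    (hi : i ∈ A) (hj : j ∈ A) (hc : (SimpleGraph.induce A t).Connected) :
    (SimpleGraph.induce U t).Reachable ⟨i, h hi⟩ ⟨j, h hj⟩ := by
  have := hc.preconnected ⟨i, hi⟩ ⟨j, hj⟩
  have := this.map (t.induceHomOfLE h).toHom
  exact this

/-- A walk from outside `S` to inside `S` must use the unique crossing edge. -/
lemma no_cross {t : SimpleGraph V} {S : Set V} {p q : V}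
    (hpq : ∀ x y, t.Adj x y → x ∈ S → y ∉ S → x = p ∧ y = q) :
    ∀ {x y : V} (w : t.Walk x y), x ∉ S → y ∈ S → s(p, q) ∉ w.edges → False := by
  intro x y w
  induction w with
  | nil => intro hx hy _; exact hx hy
  | @cons a c b h w ih =>
    intro hx hy hav
    by_cases hc : c ∈ S
    · obtain ⟨h1, h2⟩ := hpq c a h.symm hc hx
      exact hav (by simp [Walk.edges_cons, ← h1, ← h2, Sym2.eq_swap])
    · exact ih hc hy (fun hm => hav (by simp [Walk.edges_cons, hm]))

/-- A trail between two vertices of `S` stays in `S` when there is only one crossing edge. -/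
lemma trail_support_subset {t : SimpleGraph V} {S : Set V} {p q : V}
    (hpq : ∀ x y, t.Adj x y → x ∈ S → y ∉ S → x = p ∧ y = q) :
    ∀ {x y : V} (w : t.Walk x y), w.edges.Nodup → x ∈ S → y ∈ S →
      ∀ z ∈ w.support, z ∈ S := by
  intro x y w
  induction w with
  | nil => intro _ hx _ z hz; simp at hz; subst hz; exact hx
  | @cons a c b h w ih =>
    intro hnd hx hy z hz
    by_cases hc : c ∈ S
    · rcases (by simpa using hz : z = a ∨ z ∈ w.support) with rfl | hz'
      · exact hx
      · exact ih (by simp only [Walk.edges_cons] at hnd; exact hnd.of_cons) hc hy z hz'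
    · obtain ⟨h1, h2⟩ := hpq a c h hx hc
      by_cases hm : s(p, q) ∈ w.edges
      · exfalso
        have : s(a, c) = s(p, q) := by rw [h1, h2]
        simp only [Walk.edges_cons, List.nodup_cons] at hnd
        exact hnd.1 (this ▸ hm)
      · exact absurd (no_cross hpq w hc hy hm) not_false

/-- If no edge crosses `S`, walks preserve membership in `S`. -/
lemma walk_side {t : SimpleGraph V} {S : Set V}
    (hns : ∀ x y, t.Adj x y → (x ∈ S ↔ y ∈ S)) :
    ∀ {x y : V} (w : t.Walk x y), (x ∈ S ↔ y ∈ S) := by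
  intro x y w
  induction w with
  | nil => rfl
  | cons h _ ih => exact (hns _ _ h).trans ih

/-- Join two graphs by a single edge between `i1` and `i2`. -/
def joinGraph (t1 : SimpleGraph ι1) (t2 : SimpleGraph ι2) (i1 : ι1) (i2 : ι2) :
    SimpleGraph (ι1 ⊕ ι2) where
  Adj x y :=
    match x, y with
    | .inl a, .inl b => t1.Adj a b
    | .inr a, .inr b => t2.Adj a b
    | .inl a, .inr b => a = i1 ∧ b = i2
    | .inr a, .inl b => b = i1 ∧ a = i2
  symm := by
    constructor
    rintro (a | a) (b | b) h
    · exact h.symm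
    · exact ⟨h.1, h.2⟩
    · exact ⟨h.1, h.2⟩
    · exact h.symm
  loopless := by
    constructor
    rintro (a | a) h
    · exact t1.irrefl h
    · exact t2.irrefl h

lemma joinGraph_adj_inl {t1 : SimpleGraph ι1} {t2 : SimpleGraph ι2} {i1 : ι1} {i2 : ι2}
    {a b : ι1} : (joinGraph t1 t2 i1 i2).Adj (.inl a) (.inl b) ↔ t1.Adj a b := Iff.rfl

lemma joinGraph_adj_inr {t1 : SimpleGraph ι1} {t2 : SimpleGraph ι2} {i1 : ι1} {i2 : ι2}
    {a b : ι2} : (joinGraph t1 t2 i1 i2).Adj (.inr a) (.inr b) ↔ t2.Adj a b := Iff.rfl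

end TWAux
namespace TWAux
open SimpleGraph

variable {ι1 ι2 : Type}

/-- Lift a walk supported on the left side back to `t1`, avoiding a given left edge. -/
lemma lift_left {t1 : SimpleGraph ι1} {t2 : SimpleGraph ι2} {i1 : ι1} {i2 : ι2}
    {a0 b0 : ι1} :
    ∀ {x y : ι1 ⊕ ι2}
      (w : ((joinGraph t1 t2 i1 i2) \ fromEdgeSet {s(Sum.inl a0, Sum.inl b0)}).Walk x y),
      (∀ z ∈ w.support, z ∈ Set.range (Sum.inl : ι1 → ι1 ⊕ ι2)) →
      ∀ {a b : ι1}, x = Sum.inl a → y = Sum.inl b →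
      (t1 \ fromEdgeSet {s(a0, b0)}).Reachable a b := by
  intro x y w
  induction w with
  | nil =>
    rintro _ a b rfl h
    cases Sum.inl_injective h
    exact Reachable.refl _
  | @cons u c v h w ih =>
    rintro hs a b rfl rfl
    obtain ⟨c', rfl⟩ := hs c (by simp [Walk.support_cons])
    rw [sdiff_adj] at h
    have hadj : t1.Adj a c' := h.1
    have step : (t1 \ fromEdgeSet {s(a0, b0)}).Adj a c' := by
      rw [sdiff_adj]
      refine ⟨hadj, fun hf => ?_⟩
      rw [fromEdgeSet_adj] at hf
      apply h.2
      rw [fromEdgeSet_adj]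
      refine ⟨?_, fun hc => hf.2 (Sum.inl_injective hc)⟩
      have := hf.1
      simp only [Set.mem_singleton_iff] at this ⊢
      have : Sym2.map (Sum.inl : ι1 → ι1 ⊕ ι2) s(a, c') = Sym2.map Sum.inl s(a0, b0) := by
        rw [this]
      simpa [Sym2.map_pair_eq] using this
    exact (step.reachable).trans
      (ih (fun z hz => hs z (by simp [Walk.support_cons, hz])) rfl rfl)

/-- Lift a walk supported on the right side back to `t2`, avoiding a given right edge. -/
lemma lift_right {t1 : SimpleGraph ι1} {t2 : SimpleGraph ι2} {i1 : ι1} {i2 : ι2}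
    {a0 b0 : ι2} :
    ∀ {x y : ι1 ⊕ ι2}
      (w : ((joinGraph t1 t2 i1 i2) \ fromEdgeSet {s(Sum.inr a0, Sum.inr b0)}).Walk x y),
      (∀ z ∈ w.support, z ∈ Set.range (Sum.inr : ι2 → ι1 ⊕ ι2)) →
      ∀ {a b : ι2}, x = Sum.inr a → y = Sum.inr b →
      (t2 \ fromEdgeSet {s(a0, b0)}).Reachable a b := by
  intro x y w
  induction w with
  | nil =>
    rintro _ a b rfl h
    cases Sum.inr_injective h
    exact Reachable.refl _
  | @cons u c v h w ih =>
    rintro hs a b rfl rfl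
    obtain ⟨c', rfl⟩ := hs c (by simp [Walk.support_cons])
    rw [sdiff_adj] at h
    have hadj : t2.Adj a c' := h.1
    have step : (t2 \ fromEdgeSet {s(a0, b0)}).Adj a c' := by
      rw [sdiff_adj]
      refine ⟨hadj, fun hf => ?_⟩
      rw [fromEdgeSet_adj] at hf
      apply h.2
      rw [fromEdgeSet_adj]
      refine ⟨?_, fun hc => hf.2 (Sum.inr_injective hc)⟩
      have := hf.1
      simp only [Set.mem_singleton_iff] at this ⊢
      have : Sym2.map (Sum.inr : ι2 → ι1 ⊕ ι2) s(a, c') = Sym2.map Sum.inr s(a0, b0) := by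
        rw [this]
      simpa [Sym2.map_pair_eq] using this
    exact (step.reachable).trans
      (ih (fun z hz => hs z (by simp [Walk.support_cons, hz])) rfl rfl)

lemma joinGraph_isTree {t1 : SimpleGraph ι1} {t2 : SimpleGraph ι2} {i1 : ι1} {i2 : ι2}
    (h1 : t1.IsTree) (h2 : t2.IsTree) : (joinGraph t1 t2 i1 i2).IsTree := by
  constructor
  · -- connected
    have hne : Nonempty (ι1 ⊕ ι2) := ⟨Sum.inl i1⟩
    rw [connected_iff]
    refine ⟨?_, hne⟩
    have key : ∀ x : ι1 ⊕ ι2, (joinGraph t1 t2 i1 i2).Reachable x (Sum.inl i1) := by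
      rintro (a | a)
      · exact (h1.isConnected.preconnected a i1).map
          (⟨Sum.inl, fun h => h⟩ : t1 →g joinGraph t1 t2 i1 i2)
      · refine Reachable.trans ?_ (Adj.reachable (show (joinGraph t1 t2 i1 i2).Adj
          (Sum.inr i2) (Sum.inl i1) from ⟨rfl, rfl⟩))
        exact (h2.isConnected.preconnected a i2).map
          (⟨Sum.inr, fun h => h⟩ : t2 →g joinGraph t1 t2 i1 i2)
    exact fun x y => (key x).trans (key y).symm
  · -- acyclic
    rw [isAcyclic_iff_forall_adj_isBridge]
    rintro (a | a) (b | b) hadj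
    · -- left edge
      rw [isBridge_iff]
      refine fun hr => ?_
      obtain ⟨w⟩ := hr
      have hpath := w.bypass_isPath
      set p := w.bypass with hp
      have hnd : p.edges.Nodup := Walk.edges_nodup_of_support_nodup hpath.support_nodup
      have hpq : ∀ x y, ((joinGraph t1 t2 i1 i2) \
            fromEdgeSet {s(Sum.inl a, Sum.inl b)}).Adj x y →
          x ∈ Set.range (Sum.inl : ι1 → ι1 ⊕ ι2) →
          y ∉ Set.range (Sum.inl : ι1 → ι1 ⊕ ι2) →
          x = Sum.inl i1 ∧ y = Sum.inr i2 := by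
        rintro x y hxy hx hy
        obtain ⟨x', rfl⟩ := hx
        rcases y with y' | y'
        · exact absurd ⟨y', rfl⟩ hy
        · obtain ⟨h1', h2'⟩ := (sdiff_adj _ _ _ _ |>.mp hxy).1
          exact ⟨by rw [h1'], by rw [h2']⟩
      have hsupp := trail_support_subset hpq p hnd ⟨a, rfl⟩ ⟨b, rfl⟩
      have := lift_left (t2 := t2) (i1 := i1) (i2 := i2) p hsupp rfl rfl
      have hbr := (isAcyclic_iff_forall_adj_isBridge.mp h1.IsAcyclic) hadj
      rw [isBridge_iff] at hbr
      exact hbr this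
    · -- cross edge
      have ha : a = i1 := hadj.1
      have hb : b = i2 := hadj.2
      rw [isBridge_iff]
      refine fun hr => ?_
      obtain ⟨w⟩ := hr
      have hns : ∀ x y, ((joinGraph t1 t2 i1 i2) \
            fromEdgeSet {s(Sum.inl a, Sum.inr b)}).Adj x y →
          (x ∈ Set.range (Sum.inl : ι1 → ι1 ⊕ ι2) ↔
            y ∈ Set.range (Sum.inl : ι1 → ι1 ⊕ ι2)) := by
        rintro (x' | x') (y' | y') hxy
        · simp
        · exfalso
          rw [sdiff_adj] at hxy
          obtain ⟨h1', h2'⟩ := hxy.1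
          exact hxy.2 ((fromEdgeSet_adj _).mpr ⟨by simp [h1', h2', ha, hb], by simp⟩)
        · exfalso
          rw [sdiff_adj] at hxy
          obtain ⟨h1', h2'⟩ := hxy.1
          refine hxy.2 ((fromEdgeSet_adj _).mpr ⟨?_, by simp⟩)
          rw [Sym2.eq_swap]
          simp [h1', h2', ha, hb]
        · simp [show ∀ c : ι2, Sum.inr c ∉ Set.range (Sum.inl : ι1 → ι1 ⊕ ι2) from
            fun c ⟨d, hd⟩ => by simp at hd]
      have := walk_side hns w
      simp [show (Sum.inl a : ι1 ⊕ ι2) ∈ Set.range (Sum.inl : ι1 → ι1 ⊕ ι2) from ⟨a, rfl⟩,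
        show (Sum.inr b : ι1 ⊕ ι2) ∉ Set.range (Sum.inl : ι1 → ι1 ⊕ ι2) from
          fun ⟨d, hd⟩ => by simp at hd] at this
    · -- cross edge reversed
      have ha : a = i2 := hadj.2
      have hb : b = i1 := hadj.1
      rw [isBridge_iff]
      refine fun hr => ?_
      obtain ⟨w⟩ := hr
      have hns : ∀ x y, ((joinGraph t1 t2 i1 i2) \
            fromEdgeSet {s(Sum.inr a, Sum.inl b)}).Adj x y →
          (x ∈ Set.range (Sum.inl : ι1 → ι1 ⊕ ι2) ↔
            y ∈ Set.range (Sum.inl : ι1 → ι1 ⊕ ι2)) := by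
        rintro (x' | x') (y' | y') hxy
        · simp
        · exfalso
          rw [sdiff_adj] at hxy
          obtain ⟨h1', h2'⟩ := hxy.1
          refine hxy.2 ((fromEdgeSet_adj _).mpr ⟨?_, by simp⟩)
          rw [Sym2.eq_swap]
          simp [h1', h2', ha, hb]
        · exfalso
          rw [sdiff_adj] at hxy
          obtain ⟨h1', h2'⟩ := hxy.1
          exact hxy.2 ((fromEdgeSet_adj _).mpr ⟨by simp [h1', h2', ha, hb], by simp⟩)
        · simp [show ∀ c : ι2, Sum.inr c ∉ Set.range (Sum.inl : ι1 → ι1 ⊕ ι2) from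
            fun c ⟨d, hd⟩ => by simp at hd]
      have := walk_side hns w
      simp [show (Sum.inr a : ι1 ⊕ ι2) ∉ Set.range (Sum.inl : ι1 → ι1 ⊕ ι2) from
          fun ⟨d, hd⟩ => by simp at hd,
        show (Sum.inl b : ι1 ⊕ ι2) ∈ Set.range (Sum.inl : ι1 → ι1 ⊕ ι2) from ⟨b, rfl⟩] at this
    · -- right edge
      rw [isBridge_iff]
      refine fun hr => ?_
      obtain ⟨w⟩ := hr
      have hpath := w.bypass_isPath
      set p := w.bypass with hp
      have hnd : p.edges.Nodup := Walk.edges_nodup_of_support_nodup hpath.support_nodup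
      have hpq : ∀ x y, ((joinGraph t1 t2 i1 i2) \
            fromEdgeSet {s(Sum.inr a, Sum.inr b)}).Adj x y →
          x ∈ Set.range (Sum.inr : ι2 → ι1 ⊕ ι2) →
          y ∉ Set.range (Sum.inr : ι2 → ι1 ⊕ ι2) →
          x = Sum.inr i2 ∧ y = Sum.inl i1 := by
        rintro x y hxy hx hy
        obtain ⟨x', rfl⟩ := hx
        rcases y with y' | y'
        · obtain ⟨h1', h2'⟩ := (sdiff_adj _ _ _ _ |>.mp hxy).1
          exact ⟨by rw [h2'], by rw [h1']⟩
        · exact absurd ⟨y', rfl⟩ hy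
      have hsupp := trail_support_subset hpq p hnd ⟨a, rfl⟩ ⟨b, rfl⟩
      have := lift_right (t1 := t1) (i1 := i1) (i2 := i2) p hsupp rfl rfl
      have hbr := (isAcyclic_iff_forall_adj_isBridge.mp h2.IsAcyclic) hadj
      rw [isBridge_iff] at hbr
      exact hbr this

end TWAux


namespace TWAux
open SimpleGraph

variable {V : Type}

lemma walk_split_first {t : SimpleGraph V} (P : V → Prop) :
    ∀ {a b : V} (w : t.Walk a b), P b →
      ∃ (c : V) (w1 : t.Walk a c) (w2 : t.Walk c b),
        P c ∧ w = w1.append w2 ∧ ∀ x ∈ w1.support, P x → x = c := by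
  intro a b w
  induction w with
  | nil => intro hb; exact ⟨_, .nil, .nil, hb, rfl, by intro x hx _; simpa using hx⟩
  | @cons u v b h w ih =>
    intro hb
    by_cases hu : P u
    · exact ⟨u, .nil, .cons h w, hu, rfl, by intro x hx _; simpa using hx⟩
    · obtain ⟨c, w1, w2, hc, hw, hfirst⟩ := ih hb
      refine ⟨c, .cons h w1, w2, hc, by rw [Walk.cons_append, ← hw], ?_⟩
      intro x hx hPx
      rcases (by simpa [Walk.support_cons] using hx : x = u ∨ x ∈ w1.support) with rfl | hx'
      · exact absurd hPx hu
      · exact hfirst x hx' hPx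

lemma isPath_append_of_disjoint {t : SimpleGraph V} {a b c : V}
    {p : t.Walk a b} {q : t.Walk b c} (hp : p.IsPath) (hq : q.IsPath)
    (h : ∀ z, z ∈ p.support → z ∈ q.support → z = b) : (p.append q).IsPath := by
  rw [Walk.isPath_def, Walk.support_append]
  have hqtail : q.support.tail.Nodup := by
    have := hq.support_nodup
    rw [q.support_eq_cons] at this
    exact this.of_cons
  have hbq : b ∉ q.support.tail := by
    have := hq.support_nodup
    rw [q.support_eq_cons] at this
    exact (List.nodup_cons.mp this).1
  refine hp.support_nodup.append hqtail ?_
  intro z hz1 hz2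
  have : z = b := h z hz1 (List.mem_of_mem_tail hz2)
  exact hbq (this ▸ hz2)

lemma exists_path_support_subset {t : SimpleGraph V} {N : Set V}
    (hN : (SimpleGraph.induce N t).Connected) {i j : V} (hi : i ∈ N) (hj : j ∈ N) :
    ∃ p : t.Walk i j, p.IsPath ∧ ∀ z ∈ p.support, z ∈ N := by
  obtain ⟨w⟩ := hN.preconnected ⟨i, hi⟩ ⟨j, hj⟩
  let w' := w.map (⟨Subtype.val, fun h => h⟩ : SimpleGraph.induce N t →g t)
  refine ⟨w'.bypass, Walk.bypass_isPath _, fun z hz => ?_⟩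
  have hz2 := w'.support_bypass_subset hz
  have : w'.support = w.support.map Subtype.val := Walk.support_map _ _
  rw [this] at hz2
  obtain ⟨⟨z', hz'⟩, _, rfl⟩ := List.mem_map.mp hz2
  exact hz'

lemma helly3 {ι : Type} {t : SimpleGraph ι} (ht : t.IsTree) {N1 N2 N3 : Set ι}
    (c1 : (SimpleGraph.induce N1 t).Connected)
    (c2 : (SimpleGraph.induce N2 t).Connected)
    (c3 : (SimpleGraph.induce N3 t).Connected)
    {a b c : ι} (ha : a ∈ N1 ∩ N2) (hb : b ∈ N2 ∩ N3) (hc : c ∈ N1 ∩ N3) :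
    ∃ m, m ∈ N1 ∧ m ∈ N2 ∧ m ∈ N3 := by
  obtain ⟨pab, hpab, hsab⟩ := exists_path_support_subset c2 ha.2 hb.1
  obtain ⟨pac, hpac, hsac⟩ := exists_path_support_subset c1 ha.1 hc.1
  obtain ⟨pbc, hpbc, hsbc⟩ := exists_path_support_subset c3 hb.2 hc.2
  obtain ⟨m, w1, w2, hmP, heq, hfirst⟩ :=
    walk_split_first (· ∈ pac.support) pab.reverse pac.start_mem_support
  have hrev : pab.reverse.IsPath := hpab.reverse
  have hnd := hrev.support_nodup
  rw [heq, Walk.support_append] at hnd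
  have hw1path : w1.IsPath := (Walk.isPath_def _).mpr hnd.of_append_left
  have hr2path : (pac.dropUntil m hmP).IsPath := hpac.dropUntil hmP
  have hcand : (w1.append (pac.dropUntil m hmP)).IsPath :=
    isPath_append_of_disjoint hw1path hr2path
      (fun z hz1 hz2 => hfirst z hz1 (Walk.support_dropUntil_subset _ hmP hz2))
  have hunique := ht.IsAcyclic.path_unique
    ⟨w1.append (pac.dropUntil m hmP), hcand⟩ ⟨pbc, hpbc⟩
  have hsupp_eq : (w1.append (pac.dropUntil m hmP)).support = pbc.support := by
    rw [Subtype.mk_eq_mk.mp hunique]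
  have hm_cand : m ∈ (w1.append (pac.dropUntil m hmP)).support := by
    rw [Walk.support_append]
    exact List.mem_append_left _ w1.end_mem_support
  refine ⟨m, hsac m hmP, ?_, hsbc m (hsupp_eq ▸ hm_cand)⟩
  have : m ∈ pab.reverse.support := by
    rw [heq, Walk.support_append]
    exact List.mem_append_left _ w1.end_mem_support
  rw [Walk.support_reverse, List.mem_reverse] at this
  exact hsab m this

end TWAux


namespace MGraph
open TWAux

variable {G : MGraph}

lemma AdjOn.symm'' {F : Set G.E} {a b : G.V} (h : G.AdjOn F a b) : G.AdjOn F b a := by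
  obtain ⟨e, he, h2⟩ := h
  exact ⟨e, he, by rw [h2, Sym2.eq_swap]⟩

lemma TwoEdgeConnected.reachOn_compl (h : G.TwoEdgeConnected) (e : G.E) {a b : G.V}
    (hr : G.ReachOn Set.univ a b) : G.ReachOn ({e}ᶜ : Set G.E) a b := by
  induction hr with
  | refl => exact .refl
  | @tail c d _ step ih =>
    obtain ⟨f, -, hf⟩ := step
    by_cases hfe : f = e
    · subst hfe
      have hnb := h.2 f
      rw [IsBridge] at hnb
      push_neg at hnb
      exact ih.trans (hnb c d hf)
    · exact ih.tail ⟨f, hfe, hf⟩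

noncomputable def trivialDecomp (G : MGraph) : TreeDecomp G where
  ι := PUnit
  t := ⊥
  isTree := by
    constructor
    · rw [SimpleGraph.connected_iff]
      exact ⟨fun a b => by rw [Subsingleton.elim a b], ⟨.unit⟩⟩
    · rw [SimpleGraph.isAcyclic_iff_forall_adj_isBridge]
      intro v w h
      exact absurd h (by simp)
  bag _ := Set.univ
  covers_vertex v := ⟨.unit, trivial⟩
  covers_edge e := ⟨.unit, fun v _ => trivial⟩
  bags_connected v := by
    rw [SimpleGraph.connected_iff]
    refine ⟨fun a b => by rw [Subsingleton.elim a b], ⟨⟨.unit, trivial⟩⟩⟩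

lemma twLE_mono {k k' : ℕ} (h : G.twLE k) (hk : k ≤ k') : G.twLE k' :=
  let ⟨T, hT⟩ := h
  ⟨T, fun i => (hT i).trans (by omega)⟩

lemma twLE_card (G : MGraph) : G.twLE (Nat.card G.V) :=
  ⟨G.trivialDecomp, fun _ => by
    have := G.finV
    simp only [trivialDecomp, Set.ncard_univ]
    omega⟩

lemma twLE_treewidth (G : MGraph) : G.twLE G.treewidth :=
  Nat.sInf_mem (s := {k | G.twLE k}) ⟨_, G.twLE_card⟩

lemma treewidth_le_iff {k : ℕ} : G.treewidth ≤ k ↔ G.twLE k :=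
  ⟨fun h => twLE_mono G.twLE_treewidth h, fun h => Nat.sInf_le h⟩

/-- A set of vertices that is connected (in the graph-theoretic sense). -/
def ConnSet (G : MGraph) (S : Set G.V) : Prop :=
  S.Nonempty ∧ ∀ x ∈ S, ∀ y ∈ S,
    Relation.ReflTransGen (fun a b => a ∈ S ∧ b ∈ S ∧ G.AdjOn Set.univ a b) x y

lemma union_connected (T : TreeDecomp G) {S : Set G.V} (hS : G.ConnSet S) :
    (SimpleGraph.induce {i | ∃ v ∈ S, v ∈ T.bag i} T.t).Connected := by
  set U := {i | ∃ v ∈ S, v ∈ T.bag i} with hU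
  obtain ⟨⟨v0, hv0⟩, hconn⟩ := hS
  obtain ⟨i0, hi0⟩ := T.covers_vertex v0
  rw [SimpleGraph.connected_iff]
  refine ⟨?_, ⟨⟨i0, ⟨v0, hv0, hi0⟩⟩⟩⟩
  rintro ⟨i, x, hxS, hxb⟩ ⟨j, y, hyS, hyb⟩
  have key : ∀ (z : G.V), Relation.ReflTransGen
      (fun a b => a ∈ S ∧ b ∈ S ∧ G.AdjOn Set.univ a b) x z →
      ∀ (j' : T.ι) (h1 : z ∈ S) (h2 : z ∈ T.bag j'),
      (SimpleGraph.induce U T.t).Reachable ⟨i, ⟨x, hxS, hxb⟩⟩ ⟨j', ⟨z, h1, h2⟩⟩ := by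
    intro z hrtg
    induction hrtg with
    | refl =>
      intro j' h1 h2
      have hsub : {i' | x ∈ T.bag i'} ⊆ U := fun i' hi' => ⟨x, hxS, hi'⟩
      exact reachable_induce_mono hsub hxb h2 (T.bags_connected x)
    | @tail c d hxc hcd ih =>
      intro j' h1 h2
      obtain ⟨e, -, he⟩ := hcd.2.2
      obtain ⟨mm, hm⟩ := T.covers_edge e
      have hcm : c ∈ T.bag mm := hm c (by rw [he]; exact Sym2.mem_mk_left _ _)
      have hdm : d ∈ T.bag mm := hm d (by rw [he]; exact Sym2.mem_mk_right _ _)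
      have step1 := ih mm hcd.1 hcm
      have hsub : {i' | d ∈ T.bag i'} ⊆ U := fun i' hi' => ⟨d, h1, hi'⟩
      have step2 := reachable_induce_mono hsub hdm h2 (T.bags_connected d)
      exact step1.trans step2
  exact key y (hconn x hxS y hyS) j hyS hyb

lemma treewidth_le_of_contract {G H : MGraph} (φ : G.V → H.V)
    (hsurj : Function.Surjective φ)
    (hedge : ∀ f : H.E, ∃ e : G.E, (G.ends e).map φ = H.ends f)
    (hfib : ∀ v : H.V, G.ConnSet (φ ⁻¹' {v})) :
    H.treewidth ≤ G.treewidth := by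
  have := G.finV
  have key : ∀ k, G.twLE k → H.twLE k := by
    rintro k ⟨T, hT⟩
    refine ⟨⟨T.ι, T.t, T.isTree, fun i => φ '' T.bag i, ?_, ?_, ?_⟩, ?_⟩
    · intro v
      obtain ⟨x, rfl⟩ := hsurj v
      obtain ⟨i, hi⟩ := T.covers_vertex x
      exact ⟨i, Set.mem_image_of_mem φ hi⟩
    · intro f
      obtain ⟨e, he⟩ := hedge f
      obtain ⟨i, hi⟩ := T.covers_edge e
      refine ⟨i, fun v hv => ?_⟩
      rw [← he, Sym2.mem_map] at hv
      obtain ⟨x, hx, rfl⟩ := hv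
      exact Set.mem_image_of_mem φ (hi x hx)
    · intro v
      have hset : {i | v ∈ φ '' T.bag i} = {i | ∃ x ∈ (φ ⁻¹' {v}), x ∈ T.bag i} := by
        ext i
        simp only [Set.mem_setOf_eq, Set.mem_image, Set.mem_preimage, Set.mem_singleton_iff]
        tauto
      rw [hset]
      exact union_connected T (hfib v)
    · intro i
      exact (Set.ncard_image_le (Set.toFinite _)).trans (hT i)
  exact Nat.sInf_le (key _ G.twLE_treewidth)

lemma treewidth_le_of_embed {G H : MGraph} (f : H.V → G.V) (hf : Function.Injective f)
    (g : H.E → G.E) (hg : ∀ e, G.ends (g e) = (H.ends e).map f) :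
    H.treewidth ≤ G.treewidth := by
  have := G.finV
  have key : ∀ k, G.twLE k → H.twLE k := by
    rintro k ⟨T, hT⟩
    refine ⟨⟨T.ι, T.t, T.isTree, fun i => f ⁻¹' T.bag i, ?_, ?_, ?_⟩, ?_⟩
    · intro v
      obtain ⟨i, hi⟩ := T.covers_vertex (f v)
      exact ⟨i, hi⟩
    · intro e
      obtain ⟨i, hi⟩ := T.covers_edge (g e)
      refine ⟨i, fun v hv => ?_⟩
      exact hi (f v) (by rw [hg, Sym2.mem_map]; exact ⟨v, hv, rfl⟩)
    · intro v
      have hset : {i | v ∈ f ⁻¹' T.bag i} = {i | f v ∈ T.bag i} := rfl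
      rw [hset]
      exact T.bags_connected (f v)
    · intro i
      have h1 : (f ⁻¹' T.bag i).ncard = (f '' (f ⁻¹' T.bag i)).ncard :=
        (Set.ncard_image_of_injective _ hf).symm
      rw [h1]
      exact (Set.ncard_le_ncard (Set.image_preimage_subset f _) (Set.toFinite _)).trans (hT i)
  exact Nat.sInf_le (key _ G.twLE_treewidth)

lemma bramble_lb {A B C : Set G.V} (hA : G.ConnSet A) (hB : G.ConnSet B) (hC : G.ConnSet C)
    (dAB : Disjoint A B) (dAC : Disjoint A C) (dBC : Disjoint B C)
    (tAB : ∃ (e : G.E) (a b : G.V), G.ends e = s(a, b) ∧ a ∈ A ∧ b ∈ B)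
    (tAC : ∃ (e : G.E) (a b : G.V), G.ends e = s(a, b) ∧ a ∈ A ∧ b ∈ C)
    (tBC : ∃ (e : G.E) (a b : G.V), G.ends e = s(a, b) ∧ a ∈ B ∧ b ∈ C) :
    2 ≤ G.treewidth := by
  have := G.finV
  by_contra hlt
  push_neg at hlt
  obtain ⟨T, hT⟩ := (treewidth_le_iff (G := G) (k := 1)).mp (by omega)
  set NA := {i | ∃ v ∈ A, v ∈ T.bag i}
  set NB := {i | ∃ v ∈ B, v ∈ T.bag i}
  set NC := {i | ∃ v ∈ C, v ∈ T.bag i}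
  have cA := union_connected T hA
  have cB := union_connected T hB
  have cC := union_connected T hC
  have touch : ∀ {X Y : Set G.V},
      (∃ (e : G.E) (a b : G.V), G.ends e = s(a, b) ∧ a ∈ X ∧ b ∈ Y) →
      ∃ i, (∃ v ∈ X, v ∈ T.bag i) ∧ (∃ v ∈ Y, v ∈ T.bag i) := by
    rintro X Y ⟨e, a, b, he, haX, hbY⟩
    obtain ⟨i, hi⟩ := T.covers_edge e
    exact ⟨i, ⟨a, haX, hi a (by rw [he]; exact Sym2.mem_mk_left _ _)⟩,
      ⟨b, hbY, hi b (by rw [he]; exact Sym2.mem_mk_right _ _)⟩⟩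
  obtain ⟨iAB, hiAB⟩ := touch tAB
  obtain ⟨iBC, hiBC⟩ := touch tBC
  obtain ⟨iAC, hiAC⟩ := touch tAC
  obtain ⟨m, hm1, hm2, hm3⟩ := helly3 T.isTree cA cB cC
    ⟨hiAB.1, hiAB.2⟩ ⟨hiBC.1, hiBC.2⟩ ⟨hiAC.1, hiAC.2⟩
  obtain ⟨a', haA, ha⟩ := hm1
  obtain ⟨b', hbB, hb⟩ := hm2
  obtain ⟨c', hcC, hc⟩ := hm3
  have hab : a' ≠ b' := fun h => (Set.disjoint_left.mp dAB haA) (h ▸ hbB)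
  have hac : a' ≠ c' := fun h => (Set.disjoint_left.mp dAC haA) (h ▸ hcC)
  have hbc : b' ≠ c' := fun h => (Set.disjoint_left.mp dBC hbB) (h ▸ hcC)
  have hsub : ({a', b', c'} : Set G.V) ⊆ T.bag m := by
    intro x hx
    rcases hx with rfl | rfl | rfl
    exacts [ha, hb, hc]
  have h3 : ({a', b', c'} : Set G.V).ncard = 3 := by
    rw [Set.ncard_insert_of_notMem (by simp [hab, hac]) (Set.toFinite _),
      Set.ncard_pair hbc]
  have := (Set.ncard_le_ncard hsub (Set.toFinite _))
  rw [h3] at this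
  have := hT m
  omega

end MGraph


namespace TWAux
open SimpleGraph

variable {ι1 ι2 : Type}

lemma bot_punit_isTree : (⊥ : SimpleGraph PUnit).IsTree := by
  constructor
  · rw [SimpleGraph.connected_iff]
    refine ⟨fun a b => ?_, ⟨.unit⟩⟩
    rw [Subsingleton.elim a b]
  · rw [isAcyclic_iff_forall_adj_isBridge]
    intro v w h
    exact absurd h (by simp)

lemma induce_singleton_connected {t : SimpleGraph ι1} (i : ι1) :
    (SimpleGraph.induce {i} t).Connected := by
  rw [connected_iff]
  refine ⟨fun a b => ?_, ⟨⟨i, rfl⟩⟩⟩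
  have : a = b := Subtype.ext (by rw [a.2, b.2])
  rw [this]

lemma induce_image_connected {t : SimpleGraph ι1} {t' : SimpleGraph ι2} (ψ : ι1 → ι2)
    (hψ : ∀ a b, t.Adj a b → t'.Adj (ψ a) (ψ b)) {A : Set ι1}
    (hA : (SimpleGraph.induce A t).Connected) :
    (SimpleGraph.induce (ψ '' A) t').Connected := by
  refine hA.map ⟨fun a => ⟨ψ a.1, Set.mem_image_of_mem ψ a.2⟩, fun h => hψ _ _ h⟩ ?_
  rintro ⟨y, a, ha, rfl⟩
  exact ⟨⟨a, ha⟩, rfl⟩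

/-- The tree used to glue two tree decompositions along a two-node middle path. -/
def glueTree (t1 : SimpleGraph ι1) (t2 : SimpleGraph ι2) (i1 : ι1) (i2 : ι2) :
    SimpleGraph (((ι1 ⊕ PUnit) ⊕ PUnit) ⊕ ι2) :=
  joinGraph (joinGraph (joinGraph t1 ⊥ i1 PUnit.unit) ⊥ (Sum.inr PUnit.unit) PUnit.unit)
    t2 (Sum.inr PUnit.unit) i2

lemma glueTree_isTree {t1 : SimpleGraph ι1} {t2 : SimpleGraph ι2} {i1 : ι1} {i2 : ι2}
    (h1 : t1.IsTree) (h2 : t2.IsTree) : (glueTree t1 t2 i1 i2).IsTree :=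
  joinGraph_isTree (joinGraph_isTree (joinGraph_isTree h1 bot_punit_isTree)
    bot_punit_isTree) h2

end TWAux

namespace MGraph
open TWAux

lemma glue {G H1 H2 : MGraph} (T1 : TreeDecomp H1) (T2 : TreeDecomp H2)
    {f1 : H1.V → G.V} (hf1 : Function.Injective f1)
    {f2 : H2.V → G.V} (hf2 : Function.Injective f2)
    (i1 : T1.ι) (i2 : T2.ι) (b0 b1 : Set G.V)
    (hcover : ∀ v : G.V, (∃ x, f1 x = v) ∨ (∃ y, f2 y = v))
    (hedge : ∀ e : G.E, (∃ e', (H1.ends e').map f1 = G.ends e) ∨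
        (∃ e', (H2.ends e').map f2 = G.ends e) ∨
        (∀ v ∈ G.ends e, v ∈ b0) ∨ (∀ v ∈ G.ends e, v ∈ b1))
    (hC1 : ∀ x, f1 x ∈ b0 → x ∈ T1.bag i1)
    (hC2 : ∀ x, f1 x ∈ b1 → f1 x ∈ b0)
    (hC3 : ∀ y, f2 y ∈ b1 → y ∈ T2.bag i2)
    (hC4 : ∀ y, f2 y ∈ b0 → f2 y ∈ b1)
    (hC5 : ∀ x y, f1 x = f2 y → f1 x ∈ b0 ∧ f1 x ∈ b1)
    {k : ℕ} (hT1 : ∀ i, (T1.bag i).ncard ≤ k + 1) (hT2 : ∀ i, (T2.bag i).ncard ≤ k + 1)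
    (hb0 : b0.ncard ≤ k + 1) (hb1 : b1.ncard ≤ k + 1) :
    G.twLE k := by
  classical
  refine ⟨⟨((T1.ι ⊕ PUnit) ⊕ PUnit) ⊕ T2.ι, glueTree T1.t T2.t i1 i2,
    glueTree_isTree T1.isTree T2.isTree,
    Sum.elim (Sum.elim (Sum.elim (fun a => f1 '' T1.bag a) (fun _ => b0)) (fun _ => b1))
      (fun b => f2 '' T2.bag b), ?_, ?_, ?_⟩, ?_⟩
  · -- covers_vertex
    intro v
    rcases hcover v with ⟨x, rfl⟩ | ⟨y, rfl⟩
    · obtain ⟨i, hi⟩ := T1.covers_vertex x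
      exact ⟨Sum.inl (Sum.inl (Sum.inl i)), Set.mem_image_of_mem f1 hi⟩
    · obtain ⟨i, hi⟩ := T2.covers_vertex y
      exact ⟨Sum.inr i, Set.mem_image_of_mem f2 hi⟩
  · -- covers_edge
    intro e
    rcases hedge e with ⟨e', he'⟩ | ⟨e', he'⟩ | h | h
    · obtain ⟨a, ha⟩ := T1.covers_edge e'
      refine ⟨Sum.inl (Sum.inl (Sum.inl a)), fun v hv => ?_⟩
      rw [← he', Sym2.mem_map] at hv
      obtain ⟨w, hw, rfl⟩ := hv
      exact Set.mem_image_of_mem f1 (ha w hw)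
    · obtain ⟨b, hb⟩ := T2.covers_edge e'
      refine ⟨Sum.inr b, fun v hv => ?_⟩
      rw [← he', Sym2.mem_map] at hv
      obtain ⟨w, hw, rfl⟩ := hv
      exact Set.mem_image_of_mem f2 (hb w hw)
    · exact ⟨Sum.inl (Sum.inl (Sum.inr PUnit.unit)), h⟩
    · exact ⟨Sum.inl (Sum.inr PUnit.unit), h⟩
  · -- bags_connected
    intro v
    have hadj01 : (glueTree T1.t T2.t i1 i2).Adj (Sum.inl (Sum.inl (Sum.inl i1)))
        (Sum.inl (Sum.inl (Sum.inr PUnit.unit))) := ⟨rfl, rfl⟩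
    have hadj12 : (glueTree T1.t T2.t i1 i2).Adj (Sum.inl (Sum.inl (Sum.inr PUnit.unit)))
        (Sum.inl (Sum.inr PUnit.unit)) := ⟨rfl, rfl⟩
    have hadj23 : (glueTree T1.t T2.t i1 i2).Adj (Sum.inl (Sum.inr PUnit.unit))
        (Sum.inr i2) := ⟨rfl, rfl⟩
    have himg1 : ∀ {x : H1.V}, (SimpleGraph.induce
        ((fun a => (Sum.inl (Sum.inl (Sum.inl a)) : ((T1.ι ⊕ PUnit) ⊕ PUnit) ⊕ T2.ι)) ''
          {a | x ∈ T1.bag a}) (glueTree T1.t T2.t i1 i2)).Connected := by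
      intro x
      exact induce_image_connected (fun a => Sum.inl (Sum.inl (Sum.inl a)))
        (fun a b h => h) (T1.bags_connected x)
    have himg2 : ∀ {y : H2.V}, (SimpleGraph.induce
        ((fun b => (Sum.inr b : ((T1.ι ⊕ PUnit) ⊕ PUnit) ⊕ T2.ι)) ''
          {b | y ∈ T2.bag b}) (glueTree T1.t T2.t i1 i2)).Connected := by
      intro y
      exact induce_image_connected (fun b => Sum.inr b)
        (fun a b h => h) (T2.bags_connected y)
    rcases hcover v with ⟨x, rfl⟩ | ⟨y, hy⟩
    · -- v in range f1
      have hmem1 : ∀ a, f1 x ∈ f1 '' T1.bag a ↔ x ∈ T1.bag a := fun a => hf1.mem_set_image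
      by_cases hy : ∃ y, f2 y = f1 x
      · -- shared vertex
        obtain ⟨y, hy⟩ := hy
        obtain ⟨h0, h1⟩ := hC5 x y hy.symm
        have hxi1 : x ∈ T1.bag i1 := hC1 x h0
        have hyi2 : y ∈ T2.bag i2 := hC3 y (hy ▸ h1)
        have hmem2 : ∀ b, f1 x ∈ f2 '' T2.bag b ↔ y ∈ T2.bag b := by
          intro b
          rw [← hy]
          exact hf2.mem_set_image
        have hset : {n | f1 x ∈ Sum.elim (Sum.elim (Sum.elim (fun a => f1 '' T1.bag a)
            (fun _ => b0)) (fun _ => b1)) (fun b => f2 '' T2.bag b) n} =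
            ((((fun a => (Sum.inl (Sum.inl (Sum.inl a)) : ((T1.ι ⊕ PUnit) ⊕ PUnit) ⊕ T2.ι)) ''
                {a | x ∈ T1.bag a} ∪ {Sum.inl (Sum.inl (Sum.inr PUnit.unit))}) ∪
              {Sum.inl (Sum.inr PUnit.unit)}) ∪
              (fun b => (Sum.inr b : ((T1.ι ⊕ PUnit) ⊕ PUnit) ⊕ T2.ι)) '' {b | y ∈ T2.bag b}) := by
          ext n
          rcases n with ((a | u) | u) | b
          · simp [Set.mem_image, hmem1 a, hf1.eq_iff]
          · simp [h0]
          · simp [h1]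
          · simp [Set.mem_image, hmem2 b, hf2.eq_iff, ← hy]
        rw [hset]
        refine SimpleGraph.induce_connected_adj_union ?_ himg2 (Or.inr rfl)
          ⟨i2, hyi2, rfl⟩ hadj23
        refine SimpleGraph.induce_connected_adj_union ?_ (induce_singleton_connected _)
          (Or.inr rfl) rfl hadj12
        exact SimpleGraph.induce_connected_adj_union himg1 (induce_singleton_connected _)
          ⟨i1, hxi1, rfl⟩ rfl hadj01
      · -- not shared
        have hno2 : ∀ b, f1 x ∉ f2 '' T2.bag b := by
          rintro b ⟨w, -, hw⟩
          exact hy ⟨w, hw⟩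
        by_cases h0 : f1 x ∈ b0
        · by_cases h1 : f1 x ∈ b1
          · have hxi1 : x ∈ T1.bag i1 := hC1 x h0
            have hset : {n | f1 x ∈ Sum.elim (Sum.elim (Sum.elim (fun a => f1 '' T1.bag a)
                (fun _ => b0)) (fun _ => b1)) (fun b => f2 '' T2.bag b) n} =
                (((fun a => (Sum.inl (Sum.inl (Sum.inl a)) :
                    ((T1.ι ⊕ PUnit) ⊕ PUnit) ⊕ T2.ι)) ''
                  {a | x ∈ T1.bag a} ∪ {Sum.inl (Sum.inl (Sum.inr PUnit.unit))}) ∪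
                  {Sum.inl (Sum.inr PUnit.unit)}) := by
              ext n
              rcases n with ((a | u) | u) | b
              · simp [Set.mem_image, hmem1 a, hf1.eq_iff]
              · simp [h0]
              · simp [h1]
              · simp [hno2 b]
            rw [hset]
            refine SimpleGraph.induce_connected_adj_union ?_ (induce_singleton_connected _)
              (Or.inr rfl) rfl hadj12
            exact SimpleGraph.induce_connected_adj_union himg1 (induce_singleton_connected _)
              ⟨i1, hxi1, rfl⟩ rfl hadj01
          · have hxi1 : x ∈ T1.bag i1 := hC1 x h0
            have hset : {n | f1 x ∈ Sum.elim (Sum.elim (Sum.elim (fun a => f1 '' T1.bag a)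
                (fun _ => b0)) (fun _ => b1)) (fun b => f2 '' T2.bag b) n} =
                ((fun a => (Sum.inl (Sum.inl (Sum.inl a)) :
                    ((T1.ι ⊕ PUnit) ⊕ PUnit) ⊕ T2.ι)) ''
                  {a | x ∈ T1.bag a} ∪ {Sum.inl (Sum.inl (Sum.inr PUnit.unit))}) := by
              ext n
              rcases n with ((a | u) | u) | b
              · simp [Set.mem_image, hmem1 a, hf1.eq_iff]
              · simp [h0]
              · simp [h1]
              · simp [hno2 b]
            rw [hset]
            exact SimpleGraph.induce_connected_adj_union himg1 (induce_singleton_connected _)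
              ⟨i1, hxi1, rfl⟩ rfl hadj01
        · have h1 : f1 x ∉ b1 := fun h => h0 (hC2 x h)
          have hset : {n | f1 x ∈ Sum.elim (Sum.elim (Sum.elim (fun a => f1 '' T1.bag a)
              (fun _ => b0)) (fun _ => b1)) (fun b => f2 '' T2.bag b) n} =
              (fun a => (Sum.inl (Sum.inl (Sum.inl a)) :
                  ((T1.ι ⊕ PUnit) ⊕ PUnit) ⊕ T2.ι)) '' {a | x ∈ T1.bag a} := by
            ext n
            rcases n with ((a | u) | u) | b
            · simp [Set.mem_image, hmem1 a, hf1.eq_iff]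
            · simp [h0]
            · simp [h1]
            · simp [hno2 b]
          rw [hset]
          exact himg1
    · -- v in range f2 only
      by_cases hx : ∃ x, f1 x = v
      ·
        obtain ⟨x, rfl⟩ := hx
        obtain ⟨h0, h1⟩ := hC5 x y hy.symm
        have hxi1 : x ∈ T1.bag i1 := hC1 x h0
        have hyi2 : y ∈ T2.bag i2 := hC3 y (hy ▸ h1)
        have hmem1 : ∀ a, f1 x ∈ f1 '' T1.bag a ↔ x ∈ T1.bag a := fun a => hf1.mem_set_image
        have hmem2 : ∀ b, f1 x ∈ f2 '' T2.bag b ↔ y ∈ T2.bag b := by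
          intro b
          rw [← hy]
          exact hf2.mem_set_image
        have hset : {n | f1 x ∈ Sum.elim (Sum.elim (Sum.elim (fun a => f1 '' T1.bag a)
            (fun _ => b0)) (fun _ => b1)) (fun b => f2 '' T2.bag b) n} =
            ((((fun a => (Sum.inl (Sum.inl (Sum.inl a)) : ((T1.ι ⊕ PUnit) ⊕ PUnit) ⊕ T2.ι)) ''
                {a | x ∈ T1.bag a} ∪ {Sum.inl (Sum.inl (Sum.inr PUnit.unit))}) ∪
              {Sum.inl (Sum.inr PUnit.unit)}) ∪
              (fun b => (Sum.inr b : ((T1.ι ⊕ PUnit) ⊕ PUnit) ⊕ T2.ι)) '' {b | y ∈ T2.bag b}) := by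
          ext n
          rcases n with ((a | u) | u) | b
          · simp [Set.mem_image, hmem1 a, hf1.eq_iff]
          · simp [h0]
          · simp [h1]
          · simp [Set.mem_image, hmem2 b, hf2.eq_iff, ← hy]
        rw [hset]
        refine SimpleGraph.induce_connected_adj_union ?_ himg2 (Or.inr rfl)
          ⟨i2, hyi2, rfl⟩ hadj23
        refine SimpleGraph.induce_connected_adj_union ?_ (induce_singleton_connected _)
          (Or.inr rfl) rfl hadj12
        exact SimpleGraph.induce_connected_adj_union himg1 (induce_singleton_connected _)
          ⟨i1, hxi1, rfl⟩ rfl hadj01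
      · -- purely right side
        subst hy
        have hmem2 : ∀ b, f2 y ∈ f2 '' T2.bag b ↔ y ∈ T2.bag b := fun b => hf2.mem_set_image
        have hno1 : ∀ a, f2 y ∉ f1 '' T1.bag a := by
          rintro a ⟨w, -, hw⟩
          exact hx ⟨w, hw⟩
        by_cases h1 : f2 y ∈ b1
        · have hyi2 : y ∈ T2.bag i2 := hC3 y h1
          by_cases h0 : f2 y ∈ b0
          · have hset : {n | f2 y ∈ Sum.elim (Sum.elim (Sum.elim (fun a => f1 '' T1.bag a)
                (fun _ => b0)) (fun _ => b1)) (fun b => f2 '' T2.bag b) n} =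
                (({Sum.inl (Sum.inl (Sum.inr PUnit.unit))} ∪ {(Sum.inl (Sum.inr PUnit.unit) :
                    ((T1.ι ⊕ PUnit) ⊕ PUnit) ⊕ T2.ι)}) ∪
                  (fun b => (Sum.inr b : ((T1.ι ⊕ PUnit) ⊕ PUnit) ⊕ T2.ι)) ''
                    {b | y ∈ T2.bag b}) := by
              ext n
              rcases n with ((a | u) | u) | b
              · simp [hno1 a]
              · simp [h0]
              · simp [h1]
              · simp [Set.mem_image, hmem2 b, hf2.eq_iff]
            rw [hset]
            refine SimpleGraph.induce_connected_adj_union ?_ himg2 (Or.inr rfl)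
              ⟨i2, hyi2, rfl⟩ hadj23
            exact SimpleGraph.induce_connected_adj_union (induce_singleton_connected _)
              (induce_singleton_connected _) rfl rfl hadj12
          · have hset : {n | f2 y ∈ Sum.elim (Sum.elim (Sum.elim (fun a => f1 '' T1.bag a)
                (fun _ => b0)) (fun _ => b1)) (fun b => f2 '' T2.bag b) n} =
                ({(Sum.inl (Sum.inr PUnit.unit) : ((T1.ι ⊕ PUnit) ⊕ PUnit) ⊕ T2.ι)} ∪
                  (fun b => (Sum.inr b : ((T1.ι ⊕ PUnit) ⊕ PUnit) ⊕ T2.ι)) ''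
                    {b | y ∈ T2.bag b}) := by
              ext n
              rcases n with ((a | u) | u) | b
              · simp [hno1 a]
              · simp [h0]
              · simp [h1]
              · simp [Set.mem_image, hmem2 b, hf2.eq_iff]
            rw [hset]
            exact SimpleGraph.induce_connected_adj_union (induce_singleton_connected _)
              himg2 rfl ⟨i2, hyi2, rfl⟩ hadj23
        · have h0 : f2 y ∉ b0 := fun h => h1 (hC4 y h)
          have hset : {n | f2 y ∈ Sum.elim (Sum.elim (Sum.elim (fun a => f1 '' T1.bag a)
              (fun _ => b0)) (fun _ => b1)) (fun b => f2 '' T2.bag b) n} =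
              (fun b => (Sum.inr b : ((T1.ι ⊕ PUnit) ⊕ PUnit) ⊕ T2.ι)) ''
                {b | y ∈ T2.bag b} := by
            ext n
            rcases n with ((a | u) | u) | b
            · simp [hno1 a]
            · simp [h0]
            · simp [h1]
            · simp [Set.mem_image, hmem2 b, hf2.eq_iff]
          rw [hset]
          exact himg2
  · -- sizes
    rintro (((a | u) | u) | b)
    · simpa [Set.ncard_image_of_injective _ hf1] using hT1 a
    · simpa using hb0
    · simpa using hb1
    · simpa [Set.ncard_image_of_injective _ hf2] using hT2 b

end MGraph


namespace MGraph
open TWAux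

variable {G : MGraph}

lemma rtg_map {α β : Type*} (f : α → β) {r : α → α → Prop} {r' : β → β → Prop}
    (h : ∀ a b, r a b → r' (f a) (f b)) {a b : α} (hr : Relation.ReflTransGen r a b) :
    Relation.ReflTransGen r' (f a) (f b) := by
  induction hr with
  | refl => exact .refl
  | tail _ step ih => exact ih.tail (h _ _ step)

lemma firsthit {α : Type*} {r : α → α → Prop} (P : α → Prop) {a b : α}
    (hr : Relation.ReflTransGen r a b) (ha : ¬ P a) (hb : P b) :
    ∃ w z, Relation.ReflTransGen (fun x y => ¬ P x ∧ ¬ P y ∧ r x y) a w ∧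
      ¬ P w ∧ r w z ∧ P z := by
  induction hr using Relation.ReflTransGen.head_induction_on with
  | refl => exact absurd hb ha
  | @head a c hac hcb ih =>
    by_cases hc : P c
    · exact ⟨a, c, .refl, ha, hac, hc⟩
    · obtain ⟨w, z, hw, h1, h2, h3⟩ := ih hc
      exact ⟨w, z, .head ⟨ha, hc, hac⟩ hw, h1, h2, h3⟩

/-- The set of vertices reachable from `w0` while avoiding the vertex set `F`. -/
def reachAvoidSet (G : MGraph) (F : Set G.V) (w0 : G.V) : Set G.V :=
  {z | Relation.ReflTransGen (fun a b => a ∉ F ∧ b ∉ F ∧ G.AdjOn Set.univ a b) w0 z}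

lemma reachAvoidSet_not_mem {F : Set G.V} {w0 : G.V} (hw0 : w0 ∉ F) {z : G.V}
    (hz : z ∈ G.reachAvoidSet F w0) : z ∉ F := by
  rcases hz.cases_tail with rfl | ⟨c, _, step⟩
  · exact hw0
  · exact step.2.1

lemma connSet_reachAvoidSet {F : Set G.V} {w0 : G.V} (hw0 : w0 ∉ F) :
    G.ConnSet (G.reachAvoidSet F w0) := by
  set S := G.reachAvoidSet F w0 with hS
  have hbase : w0 ∈ S := Relation.ReflTransGen.refl
  have hrel : ∀ z ∈ S, Relation.ReflTransGen
      (fun a b => a ∈ S ∧ b ∈ S ∧ G.AdjOn Set.univ a b) w0 z := by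
    intro z hz
    induction hz with
    | refl => exact .refl
    | @tail c d hc step ih =>
      exact ih.tail ⟨hc, hc.tail step, step.2.2⟩
  have hsymm : Symmetric (fun a b => a ∈ S ∧ b ∈ S ∧ G.AdjOn Set.univ a b) :=
    fun a b h => ⟨h.2.1, h.1, h.2.2.symm''⟩
  refine ⟨⟨w0, hbase⟩, fun x hx y hy => ?_⟩
  exact ((@Relation.ReflTransGen.stdSymm _ _ ⟨fun a b h => hsymm h⟩).symm _ _ (hrel x hx)).trans (hrel y hy)

lemma connSet_singleton (v : G.V) : G.ConnSet {v} :=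
  ⟨⟨v, rfl⟩, by rintro x rfl y rfl; exact .refl⟩

lemma ncard_triple_le {α : Type*} (a b c : α) : ({a, b, c} : Set α).ncard ≤ 3 := by
  refine (Set.ncard_insert_le _ _).trans ?_
  have := Set.ncard_insert_le b ({c} : Set α)
  simp only [Set.ncard_singleton] at this ⊢
  omega

end MGraph


namespace MGraph
open TWAux

lemma f2_injective (G1 G2 : MGraph) (u1 : G1.V) (u2 : G2.V) :
    Function.Injective (fun v => if h : v = u2 then Sum.inl u1 else
      (Sum.inr ⟨v, h⟩ : G1.V ⊕ {v : G2.V // v ≠ u2})) := by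
  intro a b h
  simp only [] at h
  split_ifs at h with h1 h2 h2 <;>
    first
      | rw [h1, h2]
      | simpa using h

lemma vertexIdent_treewidth (G1 G2 : MGraph) (u1 : G1.V) (u2 : G2.V) :
    (MGraph.vertexIdent G1 G2 u1 u2).treewidth = max G1.treewidth G2.treewidth := by
  set f2 : G2.V → G1.V ⊕ {v : G2.V // v ≠ u2} := fun v =>
    if h : v = u2 then Sum.inl u1 else Sum.inr ⟨v, h⟩ with hf2def
  apply le_antisymm
  · -- upper bound
    rw [treewidth_le_iff]
    obtain ⟨T1, hT1⟩ := twLE_mono G1.twLE_treewidth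
      (le_max_left G1.treewidth G2.treewidth)
    obtain ⟨T2, hT2⟩ := twLE_mono G2.twLE_treewidth
      (le_max_right G1.treewidth G2.treewidth)
    obtain ⟨i1, hi1⟩ := T1.covers_vertex u1
    obtain ⟨i2, hi2⟩ := T2.covers_vertex u2
    refine glue (G := MGraph.vertexIdent G1 G2 u1 u2) T1 T2
      (f1 := Sum.inl) Sum.inl_injective
      (f2 := f2) (f2_injective G1 G2 u1 u2) i1 i2
      {Sum.inl u1} {Sum.inl u1} ?_ ?_ ?_ ?_ ?_ ?_ ?_ hT1 hT2 ((Set.ncard_singleton _).trans_le (Nat.le_add_left 1 _))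
        ((Set.ncard_singleton _).trans_le (Nat.le_add_left 1 _))
    · rintro (x | ⟨w, hw⟩)
      · exact Or.inl ⟨x, rfl⟩
      · exact Or.inr ⟨w, by simp only [hf2def, dif_neg hw]; rfl⟩
    · rintro (e | e)
      · exact Or.inl ⟨e, rfl⟩
      · exact Or.inr (Or.inl ⟨e, rfl⟩)
    · intro x hx
      have : x = u1 := Sum.inl_injective hx
      rw [this]; exact hi1
    · exact fun x h => h
    · intro y hy
      by_cases hyu : y = u2
      · rw [hyu]; exact hi2
      · rw [hf2def] at hy
        simp only [dif_neg hyu] at hy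
        exact absurd hy (by rintro ⟨⟩)
    · exact fun y h => h
    · intro x y h
      by_cases hyu : y = u2
      · rw [hf2def] at h
        simp only [hyu, dif_pos] at h
        rw [h]; exact ⟨rfl, rfl⟩
      · rw [hf2def] at h
        simp only [dif_neg hyu] at h
        exact absurd h (by simp)
  · -- lower bound
    apply max_le
    · exact treewidth_le_of_embed (f := Sum.inl) Sum.inl_injective
        (g := Sum.inl) (fun e => rfl)
    · exact treewidth_le_of_embed (f := f2) (f2_injective G1 G2 u1 u2)
        (g := Sum.inr) (fun e => rfl)

end MGraph


namespace MGraph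
open TWAux

lemma edgeIdent_treewidth (G1 G2 : MGraph)
    (h2ec1 : G1.TwoEdgeConnected) (h2ec2 : G2.TwoEdgeConnected)
    (e1 : G1.E) (e2 : G2.E) (u1 v1 : G1.V) (u2 v2 : G2.V)
    (h1 : G1.ends e1 = s(u1, v1)) (h2 : G2.ends e2 = s(u2, v2)) :
    (MGraph.edgeIdent G1 G2 e1 e2 u1 v1 u2 v2).treewidth
      = max 2 (max G1.treewidth G2.treewidth) := by
  set EI := MGraph.edgeIdent G1 G2 e1 e2 u1 v1 u2 v2 with hEI
  have huv1 : u1 ≠ v1 := by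
    intro h
    exact G1.noLoop e1 (by rw [h1, h]; exact Sym2.mk_isDiag_iff.mpr rfl)
  have huv2 : u2 ≠ v2 := by
    intro h
    exact G2.noLoop e2 (by rw [h2, h]; exact Sym2.mk_isDiag_iff.mpr rfl)
  set k := max 2 (max G1.treewidth G2.treewidth) with hk
  have hk2 : 2 ≤ k := le_max_left _ _
  apply le_antisymm
  · -- upper bound via glue
    rw [treewidth_le_iff]
    obtain ⟨T1, hT1⟩ := twLE_mono G1.twLE_treewidth
      (le_max_of_le_right (le_max_left _ _) : G1.treewidth ≤ k)
    obtain ⟨T2, hT2⟩ := twLE_mono G2.twLE_treewidth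
      (le_max_of_le_right (le_max_right _ _) : G2.treewidth ≤ k)
    obtain ⟨i1, hi1⟩ := T1.covers_edge e1
    obtain ⟨i2, hi2⟩ := T2.covers_edge e2
    have hu1 : u1 ∈ T1.bag i1 := hi1 u1 (by rw [h1]; exact Sym2.mem_mk_left _ _)
    have hv1 : v1 ∈ T1.bag i1 := hi1 v1 (by rw [h1]; exact Sym2.mem_mk_right _ _)
    have hu2 : u2 ∈ T2.bag i2 := hi2 u2 (by rw [h2]; exact Sym2.mem_mk_left _ _)
    have hv2 : v2 ∈ T2.bag i2 := hi2 v2 (by rw [h2]; exact Sym2.mem_mk_right _ _)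
    refine glue (G := EI) T1 T2 (f1 := Sum.inl) Sum.inl_injective
      (f2 := Sum.inr) Sum.inr_injective i1 i2
      {Sum.inl u1, Sum.inl v1, Sum.inr u2} {Sum.inl v1, Sum.inr u2, Sum.inr v2}
      ?_ ?_ ?_ ?_ ?_ ?_ ?_ hT1 hT2
      ((ncard_triple_le _ _ _).trans (by omega)) ((ncard_triple_le _ _ _).trans (by omega))
    · rintro (x | y)
      · exact Or.inl ⟨x, rfl⟩
      · exact Or.inr ⟨y, rfl⟩
    · rintro (⟨e, he⟩ | ⟨e, he⟩ | b)
      · exact Or.inl ⟨e, rfl⟩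
      · exact Or.inr (Or.inl ⟨e, rfl⟩)
      · cases b
        · refine Or.inr (Or.inr (Or.inr ?_))
          intro v hv
          rcases Sym2.mem_iff.mp hv with rfl | rfl
          · exact Or.inl rfl
          · exact Or.inr (Or.inr rfl)
        · refine Or.inr (Or.inr (Or.inl ?_))
          intro v hv
          rcases Sym2.mem_iff.mp hv with rfl | rfl
          · exact Or.inl rfl
          · exact Or.inr (Or.inr rfl)
    · intro x hx
      change _ = _ ∨ _ = _ ∨ _ = _ at hx
      rcases hx with h | h | h
      · rw [Sum.inl_injective h]; exact hu1
      · rw [Sum.inl_injective h]; exact hv1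
      · exact absurd h (by simp)
    · intro x hx
      change _ = _ ∨ _ = _ ∨ _ = _ at hx
      rcases hx with h | h | h
      · rw [h]; exact Or.inr (Or.inl rfl)
      · exact absurd h (by simp)
      · exact absurd h (by simp)
    · intro y hy
      change _ = _ ∨ _ = _ ∨ _ = _ at hy
      rcases hy with h | h | h
      · exact absurd h (by simp)
      · rw [Sum.inr_injective h]; exact hu2
      · rw [Sum.inr_injective h]; exact hv2
    · intro y hy
      change _ = _ ∨ _ = _ ∨ _ = _ at hy
      rcases hy with h | h | h
      · exact absurd h (by simp)
      · exact absurd h (by simp)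
      · rw [h]; exact Or.inr (Or.inl rfl)
    · intro x y h
      exact absurd h (by simp)
  · -- lower bounds
    apply max_le
    · -- 2 ≤ treewidth
      set F : Set EI.V := {Sum.inl u1, Sum.inr u2} with hF
      have hw0 : (Sum.inl v1 : EI.V) ∉ F := by
        intro h
        rcases h with h | h
        · exact huv1 (Sum.inl_injective h).symm
        · exact absurd h (by rintro ⟨⟩)
      have hv2F : (Sum.inr v2 : EI.V) ∉ F := by
        intro h
        rcases h with h | h
        · exact absurd h (by simp)
        · exact huv2 (Sum.inr_injective h).symm
      set C := EI.reachAvoidSet F (Sum.inl v1) with hC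
      -- the crossing edge between sides
      have hcross : EI.AdjOn Set.univ (Sum.inl v1) (Sum.inr v2) :=
        ⟨Sum.inr (Sum.inr false), Set.mem_univ _, rfl⟩
      have hinrv2 : (Sum.inr v2 : EI.V) ∈ C :=
        Relation.ReflTransGen.single ⟨hw0, hv2F, hcross⟩
      -- reach from v1 to u1 inside G1 minus e1, mapped to EI
      have hreach1 : Relation.ReflTransGen (fun X Y : EI.V =>
          (∃ a, X = Sum.inl a) ∧ (∃ b, Y = Sum.inl b) ∧ EI.AdjOn Set.univ X Y)
          (Sum.inl v1) (Sum.inl u1) := by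
        refine rtg_map Sum.inl ?_ (h2ec1.reachOn_compl e1 (h2ec1.1.2 v1 u1))
        rintro a b ⟨e, he, hends⟩
        exact ⟨⟨a, rfl⟩, ⟨b, rfl⟩, ⟨Sum.inl ⟨e, he⟩, Set.mem_univ _,
          by show (G1.ends e).map Sum.inl = _; rw [hends]; exact Sym2.map_pair_eq _ _ _⟩⟩
      have hreach2 : Relation.ReflTransGen (fun X Y : EI.V =>
          (∃ a, X = Sum.inr a) ∧ (∃ b, Y = Sum.inr b) ∧ EI.AdjOn Set.univ X Y)
          (Sum.inr v2) (Sum.inr u2) := by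
        refine rtg_map Sum.inr ?_ (h2ec2.reachOn_compl e2 (h2ec2.1.2 v2 u2))
        rintro a b ⟨e, he, hends⟩
        exact ⟨⟨a, rfl⟩, ⟨b, rfl⟩, ⟨Sum.inr (Sum.inl ⟨e, he⟩), Set.mem_univ _,
          by show (G2.ends e).map Sum.inr = _; rw [hends]; exact Sym2.map_pair_eq _ _ _⟩⟩
      obtain ⟨w1, z1, hchain1, hw1, hwz1, hz1⟩ := firsthit (· = (Sum.inl u1 : EI.V))
        hreach1 (by simp [Sum.inl.injEq]; exact fun h => huv1 h.symm) rfl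
      obtain ⟨w2, z2, hchain2, hw2, hwz2, hz2⟩ := firsthit (· = (Sum.inr u2 : EI.V))
        hreach2 (by simp [Sum.inr.injEq]; exact fun h => huv2 h.symm) rfl
      have hmono1 : ∀ X Y : EI.V, (¬ X = Sum.inl u1 ∧ ¬ Y = Sum.inl u1 ∧
          ((∃ a, X = Sum.inl a) ∧ (∃ b, Y = Sum.inl b) ∧ EI.AdjOn Set.univ X Y)) →
          (X ∉ F ∧ Y ∉ F ∧ EI.AdjOn Set.univ X Y) := by
        rintro X Y ⟨hX, hY, ⟨a, rfl⟩, ⟨b, rfl⟩, hadj⟩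
        exact ⟨by rintro (h | h); exact hX h; exact absurd h (by rintro ⟨⟩),
          by rintro (h | h); exact hY h; exact absurd h (by rintro ⟨⟩), hadj⟩
      have hmono2 : ∀ X Y : EI.V, (¬ X = Sum.inr u2 ∧ ¬ Y = Sum.inr u2 ∧
          ((∃ a, X = Sum.inr a) ∧ (∃ b, Y = Sum.inr b) ∧ EI.AdjOn Set.univ X Y)) →
          (X ∉ F ∧ Y ∉ F ∧ EI.AdjOn Set.univ X Y) := by
        rintro X Y ⟨hX, hY, ⟨a, rfl⟩, ⟨b, rfl⟩, hadj⟩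
        exact ⟨by rintro (h | h); exact absurd h (by simp); exact hX h,
          by rintro (h | h); exact absurd h (by simp); exact hY h, hadj⟩
      have hw1C : w1 ∈ C := Relation.ReflTransGen.mono hmono1 _ _ hchain1
      have hw2C : w2 ∈ C := hinrv2.trans (Relation.ReflTransGen.mono hmono2 _ _ hchain2)
      have hdisjC : ∀ x ∈ F, x ∉ C := fun x hx hxC => reachAvoidSet_not_mem hw0 hxC hx
      refine bramble_lb (connSet_singleton (Sum.inl u1)) (connSet_singleton (Sum.inr u2))
        (connSet_reachAvoidSet hw0) (Set.disjoint_singleton.mpr Sum.inl_ne_inr) ?_ ?_ ?_ ?_ ?_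
      · exact Set.disjoint_left.mpr (by rintro x rfl; exact hdisjC _ (Or.inl rfl))
      · exact Set.disjoint_left.mpr (by rintro x rfl; exact hdisjC _ (Or.inr rfl))
      · exact ⟨Sum.inr (Sum.inr true), Sum.inl u1, Sum.inr u2, rfl, rfl, rfl⟩
      · obtain ⟨e, -, he⟩ := hwz1.2.2
        exact ⟨e, Sum.inl u1, w1, by rw [he, hz1]; exact Sym2.eq_swap, rfl, hw1C⟩
      · obtain ⟨e, -, he⟩ := hwz2.2.2
        exact ⟨e, Sum.inr u2, w2, by rw [he, hz2]; exact Sym2.eq_swap, rfl, hw2C⟩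
    · apply max_le
      · -- treewidth G1 ≤
        refine treewidth_le_of_contract (Sum.elim id (fun _ => u1))
          (fun v => ⟨Sum.inl v, rfl⟩) ?_ ?_
        · intro f
          by_cases hf : f = e1
          · subst hf
            refine ⟨Sum.inr (Sum.inr false), ?_⟩
            show Sym2.map _ s(Sum.inl v1, Sum.inr v2) = _
            rw [Sym2.map_pair_eq, h1]
            exact Sym2.eq_swap
          · refine ⟨Sum.inl ⟨f, hf⟩, ?_⟩
            show ((G1.ends f).map Sum.inl).map _ = _
            rw [Sym2.map_map]
            have : Sum.elim id (fun _ => u1) ∘ (Sum.inl : G1.V → EI.V) = id := rfl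
            rw [this, Sym2.map_id]; rfl
        · intro v
          by_cases hv : v = u1
          · set S := (Sum.elim id (fun _ => u1) : EI.V → G1.V) ⁻¹' {v} with hS
            have hmemr : ∀ b : G2.V, (Sum.inr b : EI.V) ∈ S := fun b => hv.symm
            have hto : ∀ x ∈ S, Relation.ReflTransGen
                (fun a b => a ∈ S ∧ b ∈ S ∧ EI.AdjOn Set.univ a b) x (Sum.inl u1) := by
              rintro (a | b) hx
              · have ha : a = u1 := (hx : a = v).trans hv
                subst ha
                exact .refl
              · have hchain : Relation.ReflTransGen
                    (fun a b => a ∈ S ∧ b ∈ S ∧ EI.AdjOn Set.univ a b)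
                    (Sum.inr b) (Sum.inr u2) := by
                  refine rtg_map Sum.inr ?_ (h2ec2.reachOn_compl e2 (h2ec2.1.2 b u2))
                  rintro a' b' ⟨e, he, hends⟩
                  exact ⟨hmemr a', hmemr b', ⟨Sum.inr (Sum.inl ⟨e, he⟩), Set.mem_univ _,
                    by show (G2.ends e).map Sum.inr = _; rw [hends]; exact Sym2.map_pair_eq _ _ _⟩⟩
                refine hchain.tail ⟨hmemr u2, hv.symm, ?_⟩
                exact ⟨Sum.inr (Sum.inr true), Set.mem_univ _, Sym2.eq_swap⟩
            have hsymm : Symmetric (fun a b => a ∈ S ∧ b ∈ S ∧ EI.AdjOn Set.univ a b) :=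
              fun a b h => ⟨h.2.1, h.1, h.2.2.symm''⟩
            exact ⟨⟨Sum.inl u1, hv.symm⟩, fun x hx y hy =>
              (hto x hx).trans ((@Relation.ReflTransGen.stdSymm _ _ ⟨fun a b h => hsymm h⟩).symm _ _ (hto y hy))⟩
          · refine ⟨⟨Sum.inl v, rfl⟩, ?_⟩
            have hall : ∀ x ∈ (Sum.elim id (fun _ => u1) : EI.V → G1.V) ⁻¹' {v},
                x = Sum.inl v := by
              rintro (a | b) hx
              · have : a = v := hx
                rw [this]
              · exact absurd ((hx : u1 = v)).symm hv
            intro x hx y hy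
            rw [hall x hx, hall y hy]
            exact Relation.ReflTransGen.refl
      · -- treewidth G2 ≤
        refine treewidth_le_of_contract (Sum.elim (fun _ => u2) id)
          (fun v => ⟨Sum.inr v, rfl⟩) ?_ ?_
        · intro f
          by_cases hf : f = e2
          · subst hf
            refine ⟨Sum.inr (Sum.inr false), ?_⟩
            show Sym2.map _ s(Sum.inl v1, Sum.inr v2) = _
            rw [Sym2.map_pair_eq, h2]
            rfl
          · refine ⟨Sum.inr (Sum.inl ⟨f, hf⟩), ?_⟩
            show ((G2.ends f).map Sum.inr).map _ = _
            rw [Sym2.map_map]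
            have : Sum.elim (fun _ => u2) id ∘ (Sum.inr : G2.V → EI.V) = id := rfl
            rw [this, Sym2.map_id]; rfl
        · intro v
          by_cases hv : v = u2
          · set S := (Sum.elim (fun _ => u2) id : EI.V → G2.V) ⁻¹' {v} with hS
            have hmeml : ∀ a : G1.V, (Sum.inl a : EI.V) ∈ S := fun a => hv.symm
            have hto : ∀ x ∈ S, Relation.ReflTransGen
                (fun a b => a ∈ S ∧ b ∈ S ∧ EI.AdjOn Set.univ a b) x (Sum.inr u2) := by
              rintro (a | b) hx
              · have hchain : Relation.ReflTransGen
                    (fun a b => a ∈ S ∧ b ∈ S ∧ EI.AdjOn Set.univ a b)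
                    (Sum.inl a) (Sum.inl u1) := by
                  refine rtg_map Sum.inl ?_ (h2ec1.reachOn_compl e1 (h2ec1.1.2 a u1))
                  rintro a' b' ⟨e, he, hends⟩
                  exact ⟨hmeml a', hmeml b', ⟨Sum.inl ⟨e, he⟩, Set.mem_univ _,
                    by show (G1.ends e).map Sum.inl = _; rw [hends]; exact Sym2.map_pair_eq _ _ _⟩⟩
                refine hchain.tail ⟨hmeml u1, hv.symm, ?_⟩
                exact ⟨Sum.inr (Sum.inr true), Set.mem_univ _, rfl⟩
              · have hb : b = u2 := (hx : b = v).trans hv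
                subst hb
                exact .refl
            have hsymm : Symmetric (fun a b => a ∈ S ∧ b ∈ S ∧ EI.AdjOn Set.univ a b) :=
              fun a b h => ⟨h.2.1, h.1, h.2.2.symm''⟩
            exact ⟨⟨Sum.inr u2, hv.symm⟩, fun x hx y hy =>
              (hto x hx).trans ((@Relation.ReflTransGen.stdSymm _ _ ⟨fun a b h => hsymm h⟩).symm _ _ (hto y hy))⟩
          · refine ⟨⟨Sum.inr v, rfl⟩, ?_⟩
            have hall : ∀ x ∈ (Sum.elim (fun _ => u2) id : EI.V → G2.V) ⁻¹' {v},
                x = Sum.inr v := by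
              rintro (a | b) hx
              · exact absurd ((hx : u2 = v)).symm hv
              · have : b = v := hx
                rw [this]
            intro x hx y hy
            rw [hall x hx, hall y hy]
            exact Relation.ReflTransGen.refl

end MGraph


namespace MGraph
open TWAux

lemma vertexEdgeIdent_treewidth (G1 G2 : MGraph)
    (h2ec1 : G1.TwoEdgeConnected) (h2ec2 : G2.TwoEdgeConnected)
    (e1 : G1.E) (e2 : G2.E) (u1 v1 : G1.V) (u2 v2 : G2.V)
    (h1 : G1.ends e1 = s(u1, v1)) (h2 : G2.ends e2 = s(u2, v2)) :
    (MGraph.vertexEdgeIdent G1 G2 e1 e2 u1 v1 u2 v2 h2).treewidth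
      = max 2 (max G1.treewidth G2.treewidth) := by
  set VEI := MGraph.vertexEdgeIdent G1 G2 e1 e2 u1 v1 u2 v2 h2 with hVEI
  have huv1 : u1 ≠ v1 := by
    intro h
    exact G1.noLoop e1 (by rw [h1, h]; exact Sym2.mk_isDiag_iff.mpr rfl)
  have huv2 : u2 ≠ v2 := by
    intro h
    exact G2.noLoop e2 (by rw [h2, h]; exact Sym2.mk_isDiag_iff.mpr rfl)
  set f2 : G2.V → VEI.V := fun w => if h : w = v2 then Sum.inl v1 else Sum.inr ⟨w, h⟩
    with hf2def
  have hf2v2 : f2 v2 = Sum.inl v1 := dif_pos rfl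
  set nu2 : VEI.V := Sum.inr ⟨u2, huv2⟩ with hnu2
  have hf2u2 : f2 u2 = nu2 := dif_neg huv2
  have hf2inj : Function.Injective f2 := by
    intro a b h
    change (if h : a = v2 then (Sum.inl v1 : G1.V ⊕ {w : G2.V // w ≠ v2})
      else Sum.inr ⟨a, h⟩) = (if h : b = v2 then Sum.inl v1 else Sum.inr ⟨b, h⟩) at h
    split_ifs at h with ha hb hb <;>
      first
        | rw [ha, hb]
        | exact Subtype.ext_iff.mp (Sum.inr_injective h)
        | simpa using h
  have hnewends : VEI.ends (Sum.inr (Sum.inr ())) = s(Sum.inl u1, nu2) := rfl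
  set k := max 2 (max G1.treewidth G2.treewidth) with hk
  have hk2 : 2 ≤ k := le_max_left _ _
  apply le_antisymm
  · -- upper bound via glue
    rw [treewidth_le_iff]
    obtain ⟨T1, hT1⟩ := twLE_mono G1.twLE_treewidth
      (le_max_of_le_right (le_max_left _ _) : G1.treewidth ≤ k)
    obtain ⟨T2, hT2⟩ := twLE_mono G2.twLE_treewidth
      (le_max_of_le_right (le_max_right _ _) : G2.treewidth ≤ k)
    obtain ⟨i1, hi1⟩ := T1.covers_edge e1
    obtain ⟨i2, hi2⟩ := T2.covers_edge e2
    have hu1 : u1 ∈ T1.bag i1 := hi1 u1 (by rw [h1]; exact Sym2.mem_mk_left _ _)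
    have hv1 : v1 ∈ T1.bag i1 := hi1 v1 (by rw [h1]; exact Sym2.mem_mk_right _ _)
    have hu2 : u2 ∈ T2.bag i2 := hi2 u2 (by rw [h2]; exact Sym2.mem_mk_left _ _)
    have hv2 : v2 ∈ T2.bag i2 := hi2 v2 (by rw [h2]; exact Sym2.mem_mk_right _ _)
    refine glue (G := VEI) T1 T2 (f1 := Sum.inl) Sum.inl_injective
      (f2 := f2) hf2inj i1 i2
      {Sum.inl u1, Sum.inl v1, nu2} {Sum.inl u1, Sum.inl v1, nu2}
      ?_ ?_ ?_ ?_ ?_ ?_ ?_ hT1 hT2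
      ((ncard_triple_le _ _ _).trans (by omega)) ((ncard_triple_le _ _ _).trans (by omega))
    · rintro (x | ⟨w, hw⟩)
      · exact Or.inl ⟨x, rfl⟩
      · exact Or.inr ⟨w, by simp only [hf2def]; exact dif_neg hw⟩
    · rintro (⟨e, he⟩ | ⟨e, he⟩ | u)
      · exact Or.inl ⟨e, rfl⟩
      · exact Or.inr (Or.inl ⟨e, rfl⟩)
      · refine Or.inr (Or.inr (Or.inl ?_))
        intro v hv
        rcases Sym2.mem_iff.mp hv with rfl | rfl
        · exact Or.inl rfl
        · exact Or.inr (Or.inr rfl)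
    · intro x hx
      rcases hx with h | h | h
      · rw [Sum.inl_injective h]; exact hu1
      · rw [Sum.inl_injective h]; exact hv1
      · exact absurd h (by simp only [hnu2]; rintro ⟨⟩)
    · exact fun x h => h
    · intro y hy
      by_cases hyv : y = v2
      · rw [hyv]; exact hv2
      · rw [show f2 y = Sum.inr ⟨y, hyv⟩ from dif_neg hyv] at hy
        rcases hy with h | h | h
        · exact absurd h (by simp)
        · exact absurd h (by simp)
        · rw [hnu2] at h
          have : y = u2 := Subtype.ext_iff.mp (Sum.inr_injective h)
          rw [this]; exact hu2
    · exact fun y h => h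
    · intro x y h
      by_cases hyv : y = v2
      · rw [hyv, hf2v2] at h
        rw [h]
        exact ⟨Or.inr (Or.inl rfl), Or.inr (Or.inl rfl)⟩
      · rw [show f2 y = Sum.inr ⟨y, hyv⟩ from dif_neg hyv] at h
        exact absurd h (by simp)
  · -- lower bounds
    apply max_le
    · -- 2 ≤ treewidth
      set F : Set VEI.V := {Sum.inl u1, nu2} with hF
      have hw0 : (Sum.inl v1 : VEI.V) ∉ F := by
        intro h
        rcases h with h | h
        · exact huv1 (Sum.inl_injective h).symm
        · exact absurd h (by simp only [hnu2]; rintro ⟨⟩)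
      set C := VEI.reachAvoidSet F (Sum.inl v1) with hC
      have hreach1 : Relation.ReflTransGen (fun X Y : VEI.V =>
          (∃ a, X = Sum.inl a) ∧ (∃ b, Y = Sum.inl b) ∧ VEI.AdjOn Set.univ X Y)
          (Sum.inl v1) (Sum.inl u1) := by
        refine rtg_map Sum.inl ?_ (h2ec1.reachOn_compl e1 (h2ec1.1.2 v1 u1))
        rintro a b ⟨e, he, hends⟩
        exact ⟨⟨a, rfl⟩, ⟨b, rfl⟩, ⟨Sum.inl ⟨e, he⟩, Set.mem_univ _,
          by show (G1.ends e).map Sum.inl = _; rw [hends]; exact Sym2.map_pair_eq _ _ _⟩⟩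
      have hreach2 : Relation.ReflTransGen (fun X Y : VEI.V =>
          (∃ a, X = f2 a) ∧ (∃ b, Y = f2 b) ∧ VEI.AdjOn Set.univ X Y)
          (f2 v2) (f2 u2) := by
        refine rtg_map f2 ?_ (h2ec2.reachOn_compl e2 (h2ec2.1.2 v2 u2))
        rintro a b ⟨e, he, hends⟩
        exact ⟨⟨a, rfl⟩, ⟨b, rfl⟩, ⟨Sum.inr (Sum.inl ⟨e, he⟩), Set.mem_univ _,
          by show (G2.ends e).map _ = _; rw [hends]; exact Sym2.map_pair_eq _ _ _⟩⟩
      obtain ⟨w1, z1, hchain1, hw1, hwz1, hz1⟩ := firsthit (· = (Sum.inl u1 : VEI.V))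
        hreach1 (by simp [Sum.inl.injEq]; exact fun h => huv1 h.symm) rfl
      obtain ⟨w2, z2, hchain2, hw2, hwz2, hz2⟩ := firsthit (· = nu2)
        hreach2 (by rw [hf2v2]; simp [hnu2]) hf2u2
      have hmono1 : ∀ X Y : VEI.V, (¬ X = Sum.inl u1 ∧ ¬ Y = Sum.inl u1 ∧
          ((∃ a, X = Sum.inl a) ∧ (∃ b, Y = Sum.inl b) ∧ VEI.AdjOn Set.univ X Y)) →
          (X ∉ F ∧ Y ∉ F ∧ VEI.AdjOn Set.univ X Y) := by
        rintro X Y ⟨hX, hY, ⟨a, rfl⟩, ⟨b, rfl⟩, hadj⟩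
        exact ⟨by rintro (h | h); exact hX h; exact absurd h (by simp only [hnu2]; rintro ⟨⟩),
          by rintro (h | h); exact hY h; exact absurd h (by simp only [hnu2]; rintro ⟨⟩), hadj⟩
      have hf2notu1 : ∀ a, f2 a ≠ Sum.inl u1 := by
        intro a h
        by_cases ha : a = v2
        · rw [ha, hf2v2] at h
          exact huv1 (Sum.inl_injective h).symm
        · rw [show f2 a = Sum.inr ⟨a, ha⟩ from dif_neg ha] at h
          exact absurd h (by simp)
      have hmono2 : ∀ X Y : VEI.V, (¬ X = nu2 ∧ ¬ Y = nu2 ∧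
          ((∃ a, X = f2 a) ∧ (∃ b, Y = f2 b) ∧ VEI.AdjOn Set.univ X Y)) →
          (X ∉ F ∧ Y ∉ F ∧ VEI.AdjOn Set.univ X Y) := by
        rintro X Y ⟨hX, hY, ⟨a, rfl⟩, ⟨b, rfl⟩, hadj⟩
        exact ⟨by rintro (h | h); exact hf2notu1 a h; exact hX h,
          by rintro (h | h); exact hf2notu1 b h; exact hY h, hadj⟩
      have hw1C : w1 ∈ C := Relation.ReflTransGen.mono hmono1 _ _ hchain1
      have hw2C : w2 ∈ C := by
        have := Relation.ReflTransGen.mono hmono2 _ _ hchain2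
        rw [hf2v2] at this
        exact this
      have hdisjC : ∀ x ∈ F, x ∉ C := fun x hx hxC => reachAvoidSet_not_mem hw0 hxC hx
      refine bramble_lb (connSet_singleton (Sum.inl u1)) (connSet_singleton nu2)
        (connSet_reachAvoidSet hw0) (Set.disjoint_singleton.mpr (by simp only [hnu2]; exact Sum.inl_ne_inr)) ?_ ?_ ?_ ?_ ?_
      · exact Set.disjoint_left.mpr (by rintro x rfl; exact hdisjC _ (Or.inl rfl))
      · exact Set.disjoint_left.mpr (by rintro x rfl; exact hdisjC _ (Or.inr rfl))
      · exact ⟨Sum.inr (Sum.inr ()), Sum.inl u1, nu2, hnewends, rfl, rfl⟩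
      · obtain ⟨e, -, he⟩ := hwz1.2.2
        exact ⟨e, Sum.inl u1, w1, by rw [he, hz1]; exact Sym2.eq_swap, rfl, hw1C⟩
      · obtain ⟨e, -, he⟩ := hwz2.2.2
        exact ⟨e, nu2, w2, by rw [he, hz2]; exact Sym2.eq_swap, rfl, hw2C⟩
    · apply max_le
      · -- treewidth G1 ≤
        refine treewidth_le_of_contract (Sum.elim id (fun _ => v1))
          (fun v => ⟨Sum.inl v, rfl⟩) ?_ ?_
        · intro f
          by_cases hf : f = e1
          · subst hf
            refine ⟨Sum.inr (Sum.inr ()), ?_⟩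
            show Sym2.map _ s(Sum.inl u1, (Sum.inr ⟨u2, _⟩ : VEI.V)) = _
            rw [Sym2.map_pair_eq, h1]
            rfl
          · refine ⟨Sum.inl ⟨f, hf⟩, ?_⟩
            show ((G1.ends f).map Sum.inl).map _ = _
            rw [Sym2.map_map]
            have : Sum.elim id (fun _ => v1) ∘ (Sum.inl : G1.V → VEI.V) = id := rfl
            rw [this, Sym2.map_id]; rfl
        · intro v
          by_cases hv : v = v1
          · set S := (Sum.elim id (fun _ => v1) : VEI.V → G1.V) ⁻¹' {v} with hS
            have hmemf2 : ∀ a : G2.V, f2 a ∈ S := by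
              intro a
              by_cases ha : a = v2
              · rw [ha, hf2v2]; exact hv.symm
              · have hfa : f2 a = Sum.inr ⟨a, ha⟩ := dif_neg ha
                rw [hfa]
                exact hv.symm
            have hto : ∀ x ∈ S, Relation.ReflTransGen
                (fun a b => a ∈ S ∧ b ∈ S ∧ VEI.AdjOn Set.univ a b) x (Sum.inl v1) := by
              rintro (a | ⟨b, hb⟩) hx
              · have ha : a = v1 := (hx : a = v).trans hv
                subst ha
                exact .refl
              · have hchain : Relation.ReflTransGen
                    (fun a b => a ∈ S ∧ b ∈ S ∧ VEI.AdjOn Set.univ a b)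
                    (f2 b) (f2 v2) := by
                  refine rtg_map f2 ?_ (h2ec2.reachOn_compl e2 (h2ec2.1.2 b v2))
                  rintro a' b' ⟨e, he, hends⟩
                  exact ⟨hmemf2 a', hmemf2 b', ⟨Sum.inr (Sum.inl ⟨e, he⟩), Set.mem_univ _,
                    by show (G2.ends e).map _ = _; rw [hends]; exact Sym2.map_pair_eq _ _ _⟩⟩
                rw [hf2v2] at hchain
                have hstart : f2 b = Sum.inr ⟨b, hb⟩ := dif_neg hb
                rw [hstart] at hchain
                exact hchain
            have hsymm : Symmetric (fun a b => a ∈ S ∧ b ∈ S ∧ VEI.AdjOn Set.univ a b) :=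
              fun a b h => ⟨h.2.1, h.1, h.2.2.symm''⟩
            exact ⟨⟨Sum.inl v1, hv.symm⟩, fun x hx y hy =>
              (hto x hx).trans ((@Relation.ReflTransGen.stdSymm _ _ ⟨fun a b h => hsymm h⟩).symm _ _ (hto y hy))⟩
          · refine ⟨⟨Sum.inl v, rfl⟩, ?_⟩
            have hall : ∀ x ∈ (Sum.elim id (fun _ => v1) : VEI.V → G1.V) ⁻¹' {v},
                x = Sum.inl v := by
              rintro (a | b) hx
              · have : a = v := hx
                rw [this]
              · exact absurd ((hx : v1 = v)).symm hv
            intro x hx y hy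
            rw [hall x hx, hall y hy]
            exact Relation.ReflTransGen.refl
      · -- treewidth G2 ≤
        have hcomp : (Sum.elim (fun _ => v2) (Subtype.val : {w : G2.V // w ≠ v2} → G2.V) : VEI.V → G2.V) ∘ f2 = id := by
          funext w
          by_cases hw : w = v2
          · show Sum.elim (fun _ => v2) Subtype.val (f2 w) = w; rw [hw, hf2v2]; rfl
          · have hfw : f2 w = Sum.inr ⟨w, hw⟩ := dif_neg hw
            show Sum.elim (fun _ => v2) Subtype.val (f2 w) = w; rw [hfw]
            rfl
        refine treewidth_le_of_contract (Sum.elim (fun _ => v2) (Subtype.val : {w : G2.V // w ≠ v2} → G2.V))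
          (fun v => ?_) ?_ ?_
        · by_cases hv : v = v2
          · exact ⟨Sum.inl v1, hv.symm⟩
          · exact ⟨Sum.inr ⟨v, hv⟩, rfl⟩
        · intro f
          by_cases hf : f = e2
          · subst hf
            refine ⟨Sum.inr (Sum.inr ()), ?_⟩
            show Sym2.map _ s(Sum.inl u1, (Sum.inr ⟨u2, _⟩ : VEI.V)) = _
            rw [Sym2.map_pair_eq, h2]
            exact Sym2.eq_swap
          · refine ⟨Sum.inr (Sum.inl ⟨f, hf⟩), ?_⟩
            show ((G2.ends f).map f2).map _ = _
            exact (Sym2.map_map ..).trans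
              ((congrArg (fun g => Sym2.map g (G2.ends f)) hcomp).trans (congrFun Sym2.map_id _))
        · intro v
          by_cases hv : v = v2
          · set S := (Sum.elim (fun _ => v2) (Subtype.val : {w : G2.V // w ≠ v2} → G2.V) : VEI.V → G2.V) ⁻¹' {v} with hS
            have hmeml : ∀ a : G1.V, (Sum.inl a : VEI.V) ∈ S := fun a => hv.symm
            have hto : ∀ x ∈ S, Relation.ReflTransGen
                (fun a b => a ∈ S ∧ b ∈ S ∧ VEI.AdjOn Set.univ a b) x (Sum.inl u1) := by
              rintro (a | ⟨b, hb⟩) hx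
              · refine rtg_map Sum.inl ?_ (h2ec1.reachOn_compl e1 (h2ec1.1.2 a u1))
                rintro a' b' ⟨e, he, hends⟩
                exact ⟨hmeml a', hmeml b', ⟨Sum.inl ⟨e, he⟩, Set.mem_univ _,
                  by show (G1.ends e).map Sum.inl = _; rw [hends];
                     exact Sym2.map_pair_eq _ _ _⟩⟩
              · exact absurd ((hx : b = v).trans hv) hb
            have hsymm : Symmetric (fun a b => a ∈ S ∧ b ∈ S ∧ VEI.AdjOn Set.univ a b) :=
              fun a b h => ⟨h.2.1, h.1, h.2.2.symm''⟩
            exact ⟨⟨Sum.inl u1, hv.symm⟩, fun x hx y hy =>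
              (hto x hx).trans ((@Relation.ReflTransGen.stdSymm _ _ ⟨fun a b h => hsymm h⟩).symm _ _ (hto y hy))⟩
          · refine ⟨⟨Sum.inr ⟨v, hv⟩, rfl⟩, ?_⟩
            have hall : ∀ x ∈ (Sum.elim (fun _ => v2) (Subtype.val : {w : G2.V // w ≠ v2} → G2.V) :
                VEI.V → G2.V) ⁻¹' {v}, x = Sum.inr ⟨v, hv⟩ := by
              rintro (a | ⟨b, hb⟩) hx
              · exact absurd ((hx : v2 = v)).symm hv
              · have : b = v := hx
                subst this
                rfl
            intro x hx y hy
            rw [hall x hx, hall y hy]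
            exact Relation.ReflTransGen.refl

end MGraph


/-- treewidth under the three identification operations. -/
theorem treewidth_identifications (G1 G2 : MGraph)
    (h2ec1 : G1.TwoEdgeConnected) (h2ec2 : G2.TwoEdgeConnected) :
    (∀ (u1 : G1.V) (u2 : G2.V),
      (MGraph.vertexIdent G1 G2 u1 u2).treewidth = max G1.treewidth G2.treewidth) ∧
    (∀ (e1 : G1.E) (e2 : G2.E) (u1 v1 : G1.V) (u2 v2 : G2.V),
      G1.ends e1 = s(u1, v1) → G2.ends e2 = s(u2, v2) →
      (MGraph.edgeIdent G1 G2 e1 e2 u1 v1 u2 v2).treewidth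
        = max 2 (max G1.treewidth G2.treewidth)) ∧
    (∀ (e1 : G1.E) (e2 : G2.E) (u1 v1 : G1.V) (u2 v2 : G2.V)
      (_h1 : G1.ends e1 = s(u1, v1)) (h2 : G2.ends e2 = s(u2, v2)),
      (MGraph.vertexEdgeIdent G1 G2 e1 e2 u1 v1 u2 v2 h2).treewidth
        = max 2 (max G1.treewidth G2.treewidth)) := by
  exact ⟨fun u1 u2 => MGraph.vertexIdent_treewidth G1 G2 u1 u2,
    fun e1 e2 u1 v1 u2 v2 h1 h2 =>
      MGraph.edgeIdent_treewidth G1 G2 h2ec1 h2ec2 e1 e2 u1 v1 u2 v2 h1 h2,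
    fun e1 e2 u1 v1 u2 v2 h1 h2 =>
      MGraph.vertexEdgeIdent_treewidth G1 G2 h2ec1 h2ec2 e1 e2 u1 v1 u2 v2 h1 h2⟩
end

section
/- The only biconnected 4-regular multigraph of treewidth 1 is the closed necklace on two vertices (two vertices joined by four parallel edges), and the only biconnected 4-regular multigraph on three vertices is the closed necklace on three vertices (a triangle with all edges doubled). -/
open scoped Classical

open SimpleGraph

variable {ι : Type} {t : SimpleGraph ι}

lemma tree_path_subset (ht : t.IsAcyclic) {a b : ι} (A B : t.Walk a b) (hA : A.IsPath) :
    A.support ⊆ B.support := by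
  have h := isAcyclic_iff_path_unique.mp ht ⟨A, hA⟩ ⟨B.bypass, B.bypass_isPath⟩
  have h2 : A = B.bypass := congrArg Subtype.val h
  rw [h2]; exact B.support_bypass_subset

lemma tree_scan (ht : t.IsTree) {x y z : ι} (P : t.Walk x y) (Q : t.Walk y z) :
    ∀ {a b : ι} (W : t.Walk a b), a ∈ P.support → b ∈ Q.support →
      (∀ v ∈ W.support, v ∈ P.support ∨ v ∈ Q.support) →
      (∀ v ∈ W.support, ¬(v ∈ P.support ∧ v ∈ Q.support)) → False := by
  intro a b W
  induction W with
  | nil =>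
    intro ha hb _ h3
    exact h3 _ (Walk.start_mem_support _) ⟨ha, hb⟩
  | @cons u v zz h W' ih =>
    intro ha hb h2 h3
    have hmem : ∀ w ∈ W'.support, w ∈ (Walk.cons h W').support := by
      intro w hw; rw [Walk.support_cons]; exact List.mem_cons_of_mem _ hw
    by_cases hv : v ∈ P.support
    · exact ih hv hb (fun w hw => h2 w (hmem w hw)) (fun w hw => h3 w (hmem w hw))
    · have hvQ : v ∈ Q.support :=
        (h2 v (hmem v W'.start_mem_support)).resolve_left hv
      have haQ : u ∉ Q.support := fun hq => h3 u (Walk.start_mem_support _) ⟨ha, hq⟩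
      have hbr := (isAcyclic_iff_forall_adj_isBridge.mp ht.2) h
      rw [isBridge_iff_adj_and_forall_walk_mem_edges] at hbr
      have he := hbr ((P.dropUntil u ha).append (Q.takeUntil v hvQ))
      rw [Walk.edges_append, List.mem_append] at he
      rcases he with he | he
      · exact hv (P.snd_mem_support_of_mem_edges (P.edges_dropUntil_subset ha he))
      · exact haQ (Q.fst_mem_support_of_mem_edges (Q.edges_takeUntil_subset hvQ he))

lemma tree_median (ht : t.IsTree) {x y z : ι} (P : t.Walk x y) (Q : t.Walk y z)
    (R : t.Walk x z) (hR : R.IsPath) :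
    ∃ o, o ∈ P.support ∧ o ∈ Q.support ∧ o ∈ R.support := by
  by_contra hno
  push_neg at hno
  have claim1 : ∀ v ∈ R.support, v ∈ P.support ∨ v ∈ Q.support := by
    intro v hv
    have := tree_path_subset ht.2 R (P.append Q) hR hv
    rwa [Walk.mem_support_append_iff] at this
  exact tree_scan ht P Q R P.start_mem_support Q.end_mem_support claim1
    (fun v hv hpq => hno v hpq.1 hpq.2 hv)
section CycleStuff
open SimpleGraph
variable {G : MGraph}

lemma walkIn (T : TreeDecomp G) (v : G.V) {x y : T.ι} (hx : v ∈ T.bag x) (hy : v ∈ T.bag y) :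
    ∃ W : T.t.Walk x y, ∀ z ∈ W.support, v ∈ T.bag z := by
  have hc := T.bags_connected v
  obtain ⟨W0⟩ := hc.preconnected ⟨x, hx⟩ ⟨y, hy⟩
  refine ⟨W0.map (SimpleGraph.Embedding.induce _).toHom, ?_⟩
  intro z hz
  replace hz : z ∈ (W0.map (SimpleGraph.Embedding.induce {i | v ∈ T.bag i}).toHom).support := hz
  rw [SimpleGraph.Walk.support_map] at hz
  obtain ⟨⟨z', hz'⟩, _, rfl⟩ := List.mem_map.mp hz
  exact hz'

lemma no_cycle (T : TreeDecomp G) (hbag : ∀ i, (T.bag i).ncard ≤ 2)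
    (w : ℕ → G.V) (m : ℕ) (hm : 3 ≤ m) (hper : w m = w 0)
    (hinj : ∀ i < m, ∀ j < m, w i = w j → i = j)
    (hadj : ∀ n < m, ∃ e, G.ends e = s(w n, w (n + 1))) : False := by
  have _ := G.finV
  have hN : ∀ i : ℕ, i < m → ∃ x, w i ∈ T.bag x ∧ w (i + 1) ∈ T.bag x := by
    intro i hi
    obtain ⟨e, he⟩ := hadj i hi
    obtain ⟨x, hx⟩ := T.covers_edge e
    exact ⟨x, hx _ (by rw [he]; exact Sym2.mem_mk_left _ _),
      hx _ (by rw [he]; exact Sym2.mem_mk_right _ _)⟩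
  have hι : Nonempty T.ι := ⟨(T.covers_vertex (w 0)).choose⟩
  choose! N hN1 hN2 using hN
  -- chain walk from N 2 to N j through the bags of w 3, ..., w j
  have claim : ∀ j, 2 ≤ j → j < m → ∃ W : T.t.Walk (N 2) (N j),
      ∀ z ∈ W.support, ∃ i, 3 ≤ i ∧ i ≤ m ∧ w i ∈ T.bag z := by
    intro j
    induction j with
    | zero => omega
    | succ k ih =>
      intro h2 hlt
      rcases Nat.lt_or_ge k 2 with hk | hk
      · have hk1 : k = 1 := by omega
        subst hk1
        refine ⟨SimpleGraph.Walk.nil, ?_⟩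
        intro z hz
        rw [SimpleGraph.Walk.support_nil, List.mem_singleton] at hz
        subst hz
        exact ⟨3, le_refl _, by omega, hN2 2 (by omega)⟩
      · obtain ⟨W, hW⟩ := ih (by omega) (by omega)
        obtain ⟨W2, hW2⟩ := walkIn T (w (k + 1)) (hN2 k (by omega)) (hN1 (k + 1) (by omega))
        refine ⟨W.append W2, ?_⟩
        intro z hz
        rw [SimpleGraph.Walk.mem_support_append_iff] at hz
        rcases hz with hz | hz
        · exact hW z hz
        · exact ⟨k + 1, by omega, by omega, hW2 z hz⟩
  obtain ⟨W, hW⟩ := claim (m - 1) (by omega) (by omega)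
  have hm1 : m - 1 + 1 = m := by omega
  have hw0 : w 0 ∈ T.bag (N (m - 1)) := by
    have := hN2 (m - 1) (by omega); rw [hm1, hper] at this; exact this
  obtain ⟨W3, hW3⟩ := walkIn T (w 0) hw0 (hN1 0 (by omega))
  have hWfull : ∀ z ∈ (W.append W3).support, ∃ i, 3 ≤ i ∧ i ≤ m ∧ w i ∈ T.bag z := by
    intro z hz
    rw [SimpleGraph.Walk.mem_support_append_iff] at hz
    rcases hz with hz | hz
    · exact hW z hz
    · exact ⟨m, hm, le_refl _, by rw [hper]; exact hW3 z hz⟩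
  obtain ⟨P, hP⟩ := walkIn T (w 1) (hN2 0 (by omega)) (hN1 1 (by omega))
  obtain ⟨Q, hQ⟩ := walkIn T (w 2) (hN2 1 (by omega)) (hN1 2 (by omega))
  set R0 := (W.append W3).reverse with hR0
  obtain ⟨o, hoP, hoQ, hoR⟩ := tree_median T.isTree P Q R0.bypass R0.bypass_isPath
  have ho1 : w 1 ∈ T.bag o := hP o hoP
  have ho2 : w 2 ∈ T.bag o := hQ o hoQ
  have hoW : o ∈ (W.append W3).support := by
    have := R0.support_bypass_subset hoR
    rwa [hR0, SimpleGraph.Walk.support_reverse, List.mem_reverse] at this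
  obtain ⟨i, hi3, him, hio⟩ := hWfull o hoW
  -- normalize i to i' < m with w i = w i'
  set i' := if i = m then 0 else i with hi'
  have hwi : w i = w i' := by
    rw [hi']; split
    · next h => rw [h, hper]
    · rfl
  have hi'm : i' < m := by rw [hi']; split <;> omega
  have hne12 : w 1 ≠ w 2 := fun h => by have := hinj 1 (by omega) 2 (by omega) h; omega
  have hne1i : w 1 ≠ w i := fun h => by
    rw [hwi] at h; have := hinj 1 (by omega) i' hi'm h; rw [hi'] at this; split at this <;> omega
  have hne2i : w 2 ≠ w i := fun h => by
    rw [hwi] at h; have := hinj 2 (by omega) i' hi'm h; rw [hi'] at this; split at this <;> omega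
  have hsub : ({w 1, w 2, w i} : Set G.V) ⊆ T.bag o := by
    intro x hx
    rcases hx with rfl | rfl | rfl
    exacts [ho1, ho2, (by rwa [hwi] at hio ⊢)]
  have hc3 : ({w 1, w 2, w i} : Set G.V).ncard = 3 :=
    Set.ncard_eq_three.mpr ⟨_, _, _, hne12, hne1i, hne2i, rfl⟩
  have := Set.ncard_le_ncard hsub (Set.toFinite _)
  have := hbag o
  omega

end CycleStuff

section BuildCycle
variable {G : MGraph}

lemma exists_cycle (hN : ∀ u : G.V, ∃ v w, v ≠ w ∧ (∃ e, G.ends e = s(u, v)) ∧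
      (∃ e, G.ends e = s(u, w))) (u0 : G.V) :
    ∃ (w : ℕ → G.V) (m : ℕ), 3 ≤ m ∧ w m = w 0 ∧
      (∀ i < m, ∀ j < m, w i = w j → i = j) ∧
      ∀ n < m, ∃ e, G.ends e = s(w n, w (n + 1)) := by
  have _ := G.finV
  choose n1 n2 hne12 h1 h2 using hN
  set nxt : G.V → G.V → G.V := fun x y => if n1 y = x then n2 y else n1 y with hnxt
  have hnxt_adj : ∀ x y, ∃ e, G.ends e = s(y, nxt x y) := by
    intro x y; rw [hnxt]; dsimp only; split
    · exact h2 y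
    · exact h1 y
  have hnxt_ne : ∀ x y, nxt x y ≠ x := by
    intro x y; rw [hnxt]; dsimp only; split
    · next h => rw [← h]; exact (hne12 y).symm
    · next h => exact h
  set p : ℕ → G.V × G.V := fun n => Nat.rec (u0, n1 u0) (fun _ q => (q.2, nxt q.1 q.2)) n with hp
  set v : ℕ → G.V := fun n => (p n).1 with hv
  have hv1 : ∀ n, v (n + 1) = (p n).2 := fun n => rfl
  have hadj : ∀ n, ∃ e, G.ends e = s(v n, v (n + 1)) := by
    intro n
    cases n with
    | zero => exact h1 u0
    | succ k => exact hnxt_adj (p k).1 (p k).2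
  have hnb : ∀ n, v (n + 2) ≠ v n := by
    intro n
    exact hnxt_ne (p n).1 (p n).2
  have hcd : ∀ n, v (n + 1) ≠ v n := by
    intro n h
    obtain ⟨e, he⟩ := hadj n
    apply G.noLoop e
    rw [he, h, Sym2.mk_isDiag_iff]
  obtain ⟨a, b, hab, heq⟩ := Finite.exists_ne_map_eq_of_infinite v
  have hPex : ∃ l, ∃ k, k < l ∧ v k = v l := by
    rcases Nat.lt_or_ge a b with h | h
    · exact ⟨b, a, h, heq⟩
    · exact ⟨a, b, by omega, heq.symm⟩
  set l := Nat.find hPex with hl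
  obtain ⟨k, hkl, hvk⟩ := Nat.find_spec hPex
  refine ⟨fun n => v (k + n), l - k, ?_, ?_, ?_, ?_⟩
  · -- 3 ≤ l - k
    by_contra h
    interval_cases hd : (l - k)
    · omega
    · have : l = k + 1 := by omega
      exact hcd k (by rw [← this, hvk])
    · have : l = k + 2 := by omega
      exact hnb k (by rw [← this, hvk])
  · have h0 : k + (l - k) = l := by omega
    show v (k + (l - k)) = v (k + 0)
    rw [h0, Nat.add_zero]
    exact hvk.symm
  · intro i hi j hj hij
    by_contra hne
    rcases Nat.lt_or_ge i j with h | h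
    · exact Nat.find_min hPex (show k + j < l by omega) ⟨k + i, by omega, hij⟩
    · exact Nat.find_min hPex (show k + i < l by omega) ⟨k + j, by omega, hij.symm⟩
  · intro n _
    exact hadj (k + n)

lemma two_nbrs (hconn : G.Connected) (hncv : ∀ v, ¬G.IsCutVertex v)
    (h3 : 3 ≤ Nat.card G.V) (hdeg : ∀ v, G.deg v = 4) (u : G.V) :
    ∃ v w, v ≠ w ∧ (∃ e, G.ends e = s(u, v)) ∧ (∃ e, G.ends e = s(u, w)) := by
  have _ := G.finV
  have hdu := hdeg u
  unfold MGraph.deg MGraph.degOn at hdu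
  have hne : {e : G.E | e ∈ Set.univ ∧ u ∈ G.ends e}.Nonempty := by
    rw [Set.nonempty_iff_ne_empty]
    intro h
    rw [h, Set.ncard_empty] at hdu
    omega
  obtain ⟨e0, -, he0⟩ := hne
  obtain ⟨v0, hv0⟩ := Sym2.mem_iff_exists.mp he0
  have hv0u : v0 ≠ u := by
    intro h
    exact G.noLoop e0 (by rw [hv0, h, Sym2.mk_isDiag_iff])
  by_contra hno
  push_neg at hno
  have hall : ∀ e : G.E, u ∈ G.ends e → G.ends e = s(u, v0) := by
    intro e he
    obtain ⟨x, hx⟩ := Sym2.mem_iff_exists.mp he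
    by_cases hxv : x = v0
    · rw [hx, hxv]
    · exact (hno v0 x (Ne.symm hxv) ⟨e0, hv0⟩ e hx).elim
  obtain ⟨b, hbu, hbv0⟩ : ∃ b : G.V, b ≠ u ∧ b ≠ v0 := by
    by_contra h
    push_neg at h
    have hsub : (Set.univ : Set G.V) ⊆ {u, v0} := by
      intro x _
      by_cases hxu : x = u
      · exact Or.inl hxu
      · exact Or.inr (h x hxu)
    have h1 := Set.ncard_le_ncard hsub (Set.toFinite _)
    rw [Set.ncard_univ] at h1
    have h2 := Set.ncard_insert_le u ({v0} : Set G.V)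
    rw [Set.ncard_singleton] at h2
    omega
  apply hncv v0
  refine ⟨u, b, Ne.symm hv0u, hbv0, hconn.2 u b, ?_⟩
  intro hreach
  rcases Relation.ReflTransGen.cases_head hreach with heq | ⟨c, ⟨-, hc', hadj'⟩, -⟩
  · exact hbu heq.symm
  · obtain ⟨e, -, he⟩ := hadj'
    have hu := hall e (by rw [he]; exact Sym2.mem_mk_left _ _)
    rw [he] at hu
    exact hc' (Sym2.congr_right.mp hu)

lemma three_le_card {α : Type} [Finite α] {a b c : α} (h1 : a ≠ b) (h2 : a ≠ c)
    (h3 : b ≠ c) : 3 ≤ Nat.card α := by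
  have h := Set.ncard_le_ncard (Set.subset_univ ({a, b, c} : Set α)) (Set.toFinite _)
  rw [Set.ncard_univ, Set.ncard_eq_three.mpr ⟨a, b, c, h1, h2, h3, rfl⟩] at h
  exact h

lemma ends_rep (G : MGraph) (e : G.E) : ∃ p q, G.ends e = s(p, q) ∧ p ≠ q := by
  obtain ⟨p, q, h⟩ := (Sym2.exists (f := fun z => G.ends e = z)).mp ⟨_, rfl⟩
  exact ⟨p, q, h, fun hh => G.noLoop e (by rw [h, hh, Sym2.mk_isDiag_iff])⟩

lemma part1 (G : MGraph) (hb : G.Biconnected) (hdeg : ∀ v, G.deg v = 4)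
    (htw : G.treewidth = 1) : Nonempty (MIso G (MGraph.necklace 2 (by norm_num))) := by
  have _ := G.finV
  have _ := G.finE
  have hTW : G.twLE 1 := by
    have hne : {k | G.twLE k}.Nonempty := by
      by_contra h
      rw [Set.not_nonempty_iff_eq_empty] at h
      unfold MGraph.treewidth at htw
      rw [h, Nat.sInf_empty] at htw
      omega
    have hmem := Nat.sInf_mem hne
    unfold MGraph.treewidth at htw
    rwa [htw] at hmem
  obtain ⟨T, hbag⟩ := hTW
  have u0 : G.V := Classical.choice hb.1.1
  have hcard : Nat.card G.V = 2 := by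
    have h2 := hb.2.1
    by_contra h
    have h3 : 3 ≤ Nat.card G.V := by omega
    obtain ⟨wf, m, hm, hper, hinj, hadj⟩ :=
      exists_cycle (fun u => two_nbrs hb.1 hb.2.2 h3 hdeg u) u0
    exact no_cycle T (fun i => by have := hbag i; omega) wf m hm hper hinj hadj
  letI : Fintype G.V := Fintype.ofFinite _
  letI : Fintype G.E := Fintype.ofFinite _
  have hall : ∀ (u : G.V) (e : G.E), u ∈ G.ends e := by
    intro u e
    obtain ⟨p, q, hpq, hne⟩ := ends_rep G e
    by_contra hu
    have hup : u ≠ p := fun h => hu (by rw [hpq, h]; exact Sym2.mem_mk_left _ _)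
    have huq : u ≠ q := fun h => hu (by rw [hpq, h]; exact Sym2.mem_mk_right _ _)
    have := three_le_card hup huq hne
    omega
  have hE4 : Fintype.card G.E = 4 := by
    have hd := hdeg u0
    unfold MGraph.deg MGraph.degOn at hd
    have hs : {e : G.E | e ∈ Set.univ ∧ u0 ∈ G.ends e} = Set.univ := by
      ext e; simp [hall u0 e]
    rw [hs, Set.ncard_univ, Nat.card_eq_fintype_card] at hd
    exact hd
  have vE : G.V ≃ ZMod 2 := Fintype.equivOfCardEq
    (by rw [← Nat.card_eq_fintype_card, hcard, ZMod.card])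
  have eE : G.E ≃ ZMod 2 × Bool := Fintype.equivOfCardEq
    (by rw [hE4, Fintype.card_prod, Fintype.card_bool, ZMod.card])
  refine ⟨⟨vE, eE, ?_⟩⟩
  intro e
  obtain ⟨p, q, hpq, hne⟩ := ends_rep G e
  have key : ∀ (j x y : ZMod 2), x ≠ y → s(j, j + 1) = s(x, y) := by decide
  show s((eE e).1, (eE e).1 + 1) = Sym2.map vE (G.ends e)
  rw [hpq, Sym2.map_pair_eq]
  exact key _ _ _ (fun h => hne (vE.injective h))

lemma part2 (G : MGraph) (hdeg : ∀ v, G.deg v = 4) (h3 : Nat.card G.V = 3) :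
    Nonempty (MIso G (MGraph.necklace 3 (by norm_num))) := by
  have _ := G.finV
  have _ := G.finE
  letI : Fintype G.V := Fintype.ofFinite _
  letI : Fintype G.E := Fintype.ofFinite _
  have hV3 : Fintype.card G.V = Fintype.card (ZMod 3) := by
    rw [← Nat.card_eq_fintype_card, h3, ZMod.card]
  have vE : G.V ≃ ZMod 3 := Fintype.equivOfCardEq hV3
  set g : ZMod 3 → ZMod 3 := fun x => if x = 1 then 0 else if x = 0 then 1 else 2 with hg
  set κ : G.E → ZMod 3 :=
    fun e => g (Sym2.lift ⟨fun x y => vE x + vE y, fun x y => by ring⟩ (G.ends e)) with hκ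
  set a := vE.symm 0 with ha
  set b := vE.symm 1 with hbdef
  set c := vE.symm 2 with hc
  have hab : a ≠ b := fun h => by
    have := vE.symm.injective h; exact absurd this (by decide)
  have hac : a ≠ c := fun h => by
    have := vE.symm.injective h; exact absurd this (by decide)
  have hbc : b ≠ c := fun h => by
    have := vE.symm.injective h; exact absurd this (by decide)
  have hmapeq : ∀ (x y u v : ZMod 3), s(x, y) = s(u, v) →
      s(vE.symm x, vE.symm y) = s(vE.symm u, vE.symm v) := by
    intro x y u v h
    have := congrArg (Sym2.map vE.symm) h
    rwa [Sym2.map_pair_eq, Sym2.map_pair_eq] at this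
  have keyz : ∀ x y : ZMod 3, x ≠ y →
      (g (x + y) = 0 ∧ s(x, y) = s(0, 1)) ∨ (g (x + y) = 1 ∧ s(x, y) = s(1, 2)) ∨
      (g (x + y) = 2 ∧ s(x, y) = s(0, 2)) := by decide
  have claimκ : ∀ e : G.E, (κ e = 0 ∧ G.ends e = s(a, b)) ∨
      (κ e = 1 ∧ G.ends e = s(b, c)) ∨ (κ e = 2 ∧ G.ends e = s(a, c)) := by
    intro e
    obtain ⟨p, q, hpq, hne⟩ := ends_rep G e
    have hκe : κ e = g (vE p + vE q) := by rw [hκ]; dsimp only; rw [hpq, Sym2.lift_mk]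
    have hpq' : G.ends e = s(vE.symm (vE p), vE.symm (vE q)) := by
      rw [hpq, Equiv.symm_apply_apply, Equiv.symm_apply_apply]
    have hxy : vE p ≠ vE q := fun h => hne (vE.injective h)
    rcases keyz _ _ hxy with ⟨h1, h2⟩ | ⟨h1, h2⟩ | ⟨h1, h2⟩
    · exact Or.inl ⟨hκe.trans h1, hpq'.trans (hmapeq _ _ _ _ h2)⟩
    · exact Or.inr (Or.inl ⟨hκe.trans h1, hpq'.trans (hmapeq _ _ _ _ h2)⟩)
    · exact Or.inr (Or.inr ⟨hκe.trans h1, hpq'.trans (hmapeq _ _ _ _ h2)⟩)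
  set Sab : Set G.E := {e | G.ends e = s(a, b)} with hSab
  set Sbc : Set G.E := {e | G.ends e = s(b, c)} with hSbc
  set Sac : Set G.E := {e | G.ends e = s(a, c)} with hSac
  -- degree splits
  have hsplit : ∀ (u : G.V) (X Y : Set G.E),
      ({e : G.E | e ∈ Set.univ ∧ u ∈ G.ends e} = X ∪ Y) →
      Disjoint X Y → X.ncard + Y.ncard = 4 := by
    intro u X Y hXY hd
    have hdu := hdeg u
    unfold MGraph.deg MGraph.degOn at hdu
    rw [hXY, Set.ncard_union_eq hd (Set.toFinite _) (Set.toFinite _)] at hdu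
    exact hdu
  have hdisj1 : Disjoint Sab Sac := by
    rw [Set.disjoint_left]
    intro e h1 h2
    rw [hSab, Set.mem_setOf_eq] at h1
    rw [hSac, Set.mem_setOf_eq] at h2
    exact hbc (Sym2.congr_right.mp (h1.symm.trans h2))
  have hdisj2 : Disjoint Sab Sbc := by
    rw [Set.disjoint_left]
    intro e h1 h2
    rw [hSab, Set.mem_setOf_eq] at h1
    rw [hSbc, Set.mem_setOf_eq] at h2
    rw [Sym2.eq_swap (a := a)] at h1
    exact hac (Sym2.congr_right.mp (h1.symm.trans h2))
  have hdisj3 : Disjoint Sbc Sac := by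
    rw [Set.disjoint_left]
    intro e h1 h2
    rw [hSbc, Set.mem_setOf_eq] at h1
    rw [hSac, Set.mem_setOf_eq] at h2
    rw [Sym2.eq_swap (a := b)] at h1
    rw [Sym2.eq_swap (a := a)] at h2
    exact hab (Sym2.congr_right.mp (h1.symm.trans h2)).symm
  have hsa : {e : G.E | e ∈ Set.univ ∧ a ∈ G.ends e} = Sab ∪ Sac := by
    ext e
    simp only [Set.mem_setOf_eq, Set.mem_union, Set.mem_univ, true_and, hSab, hSac]
    constructor
    · intro hae
      rcases claimκ e with ⟨-, h⟩ | ⟨-, h⟩ | ⟨-, h⟩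
      · exact Or.inl h
      · rw [h, Sym2.mem_iff] at hae
        rcases hae with h' | h'
        · exact (hab h').elim
        · exact (hac h').elim
      · exact Or.inr h
    · intro h
      rcases h with h | h
      · rw [h]; exact Sym2.mem_mk_left _ _
      · rw [h]; exact Sym2.mem_mk_left _ _
  have hsb : {e : G.E | e ∈ Set.univ ∧ b ∈ G.ends e} = Sab ∪ Sbc := by
    ext e
    simp only [Set.mem_setOf_eq, Set.mem_union, Set.mem_univ, true_and, hSab, hSbc]
    constructor
    · intro hae
      rcases claimκ e with ⟨-, h⟩ | ⟨-, h⟩ | ⟨-, h⟩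
      · exact Or.inl h
      · exact Or.inr h
      · rw [h, Sym2.mem_iff] at hae
        rcases hae with h' | h'
        · exact (hab h'.symm).elim
        · exact (hbc h').elim
    · intro h
      rcases h with h | h
      · rw [h]; exact Sym2.mem_mk_right _ _
      · rw [h]; exact Sym2.mem_mk_left _ _
  have hsc : {e : G.E | e ∈ Set.univ ∧ c ∈ G.ends e} = Sbc ∪ Sac := by
    ext e
    simp only [Set.mem_setOf_eq, Set.mem_union, Set.mem_univ, true_and, hSbc, hSac]
    constructor
    · intro hae
      rcases claimκ e with ⟨-, h⟩ | ⟨-, h⟩ | ⟨-, h⟩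
      · rw [h, Sym2.mem_iff] at hae
        rcases hae with h' | h'
        · exact (hac h'.symm).elim
        · exact (hbc h'.symm).elim
      · exact Or.inl h
      · exact Or.inr h
    · intro h
      rcases h with h | h
      · rw [h]; exact Sym2.mem_mk_right _ _
      · rw [h]; exact Sym2.mem_mk_right _ _
  have e1 : Sab.ncard + Sac.ncard = 4 := hsplit a _ _ hsa hdisj1
  have e2 : Sab.ncard + Sbc.ncard = 4 := hsplit b _ _ hsb hdisj2
  have e3 : Sbc.ncard + Sac.ncard = 4 := hsplit c _ _ hsc hdisj3
  have hab2 : Sab.ncard = 2 := by omega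
  have hbc2 : Sbc.ncard = 2 := by omega
  have hac2 : Sac.ncard = 2 := by omega
  have hfib0 : {e : G.E | κ e = 0} = Sab := by
    ext e
    simp only [Set.mem_setOf_eq, hSab]
    constructor
    · intro h0
      rcases claimκ e with ⟨h1, h2⟩ | ⟨h1, h2⟩ | ⟨h1, h2⟩
      · exact h2
      · exact absurd (h0.symm.trans h1) (by decide)
      · exact absurd (h0.symm.trans h1) (by decide)
    · intro h2
      rcases claimκ e with ⟨h1, h2'⟩ | ⟨h1, h2'⟩ | ⟨h1, h2'⟩
      · exact h1
      · exfalso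
        rw [h2, Sym2.eq_iff] at h2'
        rcases h2' with ⟨h', _⟩ | ⟨h', _⟩
        · exact hab h'
        · exact hac h'
      · exfalso
        rw [h2] at h2'
        exact hbc (Sym2.congr_right.mp h2')
  have hfib1 : {e : G.E | κ e = 1} = Sbc := by
    ext e
    simp only [Set.mem_setOf_eq, hSbc]
    constructor
    · intro h0
      rcases claimκ e with ⟨h1, h2⟩ | ⟨h1, h2⟩ | ⟨h1, h2⟩
      · exact absurd (h0.symm.trans h1) (by decide)
      · exact h2
      · exact absurd (h0.symm.trans h1) (by decide)
    · intro h2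
      rcases claimκ e with ⟨h1, h2'⟩ | ⟨h1, h2'⟩ | ⟨h1, h2'⟩
      · exfalso
        rw [h2, Sym2.eq_iff] at h2'
        rcases h2' with ⟨h', _⟩ | ⟨_, h'⟩
        · exact hab h'.symm
        · exact hac h'.symm
      · exact h1
      · exfalso
        rw [h2, Sym2.eq_iff] at h2'
        rcases h2' with ⟨h', _⟩ | ⟨h', _⟩
        · exact hab h'.symm
        · exact hbc h' 
  have hfib2 : {e : G.E | κ e = 2} = Sac := by
    ext e
    simp only [Set.mem_setOf_eq, hSac]
    constructor
    · intro h0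
      rcases claimκ e with ⟨h1, h2⟩ | ⟨h1, h2⟩ | ⟨h1, h2⟩
      · exact absurd (h0.symm.trans h1) (by decide)
      · exact absurd (h0.symm.trans h1) (by decide)
      · exact h2
    · intro h2
      rcases claimκ e with ⟨h1, h2'⟩ | ⟨h1, h2'⟩ | ⟨h1, h2'⟩
      · exfalso
        rw [h2] at h2'
        exact hbc (Sym2.congr_right.mp h2').symm
      · exfalso
        rw [h2, Sym2.eq_iff] at h2'
        rcases h2' with ⟨h', _⟩ | ⟨h', _⟩
        · exact hab h'
        · exact hac h'
      · exact h1
  have hfibcard : ∀ i : ZMod 3, Nat.card {e : G.E // κ e = i} = 2 := by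
    have hi : ∀ i : ZMod 3, i = 0 ∨ i = 1 ∨ i = 2 := by decide
    intro i
    rcases hi i with rfl | rfl | rfl
    · show Nat.card ↥{e : G.E | κ e = 0} = 2
      rw [Nat.card_coe_set_eq, hfib0, hab2]
    · show Nat.card ↥{e : G.E | κ e = 1} = 2
      rw [Nat.card_coe_set_eq, hfib1, hbc2]
    · show Nat.card ↥{e : G.E | κ e = 2} = 2
      rw [Nat.card_coe_set_eq, hfib2, hac2]
  have feq : ∀ i : ZMod 3, {e : G.E // κ e = i} ≃ Bool := fun i => by
    haveI : Fintype {e : G.E // κ e = i} := Fintype.ofFinite _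
    exact Fintype.equivOfCardEq
      (by rw [← Nat.card_eq_fintype_card, hfibcard i, Fintype.card_bool])
  let eE : G.E ≃ ZMod 3 × Bool :=
    (Equiv.sigmaFiberEquiv κ).symm.trans
      ((Equiv.sigmaCongrRight feq).trans (Equiv.sigmaEquivProd (ZMod 3) Bool))
  have heE1 : ∀ e, (eE e).1 = κ e := fun e => rfl
  refine ⟨⟨vE, eE, ?_⟩⟩
  intro e
  show s((eE e).1, (eE e).1 + 1) = Sym2.map vE (G.ends e)
  rw [heE1 e]
  have hva : vE a = 0 := by rw [ha, Equiv.apply_symm_apply]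
  have hvb : vE b = 1 := by rw [hbdef, Equiv.apply_symm_apply]
  have hvc : vE c = 2 := by rw [hc, Equiv.apply_symm_apply]
  rcases claimκ e with ⟨h1, h2⟩ | ⟨h1, h2⟩ | ⟨h1, h2⟩
  · rw [h1, h2, Sym2.map_pair_eq, hva, hvb]; decide
  · rw [h1, h2, Sym2.map_pair_eq, hvb, hvc]; decide
  · rw [h1, h2, Sym2.map_pair_eq, hva, hvc]; decide

/-- the only biconnected 4-regular multigraph of treewidth 1 is
the closed necklace on two vertices, and the only biconnected 4-regular
multigraph on three vertices is the closed necklace on three vertices. -/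
theorem necklace_characterizations :
    (∀ G : MGraph, G.Biconnected → (∀ v, G.deg v = 4) → G.treewidth = 1 →
      Nonempty (MIso G (MGraph.necklace 2 (by norm_num)))) ∧
    (∀ G : MGraph, G.Biconnected → (∀ v, G.deg v = 4) → Nat.card G.V = 3 →
      Nonempty (MIso G (MGraph.necklace 3 (by norm_num)))) := by
  exact ⟨fun G hb hd htw => part1 G hb hd htw, fun G hb hd h3 => part2 G hd h3⟩
end BuildCycle
end
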